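/- Let Q be a seminormal quasi-crystal such that the set {wt(x) : x ∈ Q} of weights of elements of Q is linearly independent in V. Then the plactic congruence is contained in the hypoplactic congruence, ≈ ⊆ ∼̈ (i.e., for all words u, v ∈ Q*, u ≈ v implies u ∼̈ v). Consequently, the hypoplactic monoid hypo(Q) = Q*/∼̈ is a monoid quotient of the plactic monoid plac(Q) = Q*/≈. -/

import Mathlib

/-! ## Root system setting -/

/-- The data of a root system `Φ` in a Euclidean space `V`, together with a choice of
simple roots `(α_i)_{i ∈ ι}` and a weight lattice `Λ`, with the integer-valued coroot
pairing `pair λ i = ⟨λ, α_i^∨⟩ = 2⟪λ, α_i⟫/⟪α_i, α_i⟫` on the weight lattice. -/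
structure QCSetting (V : Type*) [NormedAddCommGroup V] [InnerProductSpace ℝ V]
    (ι : Type*) where
  Φ : Set V
  finite : Φ.Finite
  nonempty : Φ.Nonempty
  zero_not_mem : (0 : V) ∉ Φ
  reflect_mem : ∀ a ∈ Φ, ∀ b ∈ Φ, b - (2 * (inner ℝ b a : ℝ) / (inner ℝ a a : ℝ)) • a ∈ Φ
  smul_root : ∀ a ∈ Φ, ∀ k : ℝ, k • a ∈ Φ → k = 1 ∨ k = -1
  simple : ι → V
  simple_mem : ∀ i, simple i ∈ Φ
  simple_indep : LinearIndependent ℝ simple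
  Λ : AddSubgroup V
  lattice_spans : Submodule.span ℝ (Λ : Set V) = ⊤
  root_mem_lattice : ∀ a ∈ Φ, a ∈ Λ
  pair : Λ → ι → ℤ
  pair_spec : ∀ (v : Λ) (i : ι),
    (pair v i : ℝ) = 2 * (inner ℝ (v : V) (simple i) : ℝ) / (inner ℝ (simple i) (simple i) : ℝ)

variable {V : Type*} [NormedAddCommGroup V] [InnerProductSpace ℝ V] {ι : Type*}

/-! ## Quasi-crystals -/

/-- The structure maps of a quasi-crystal of type `S` on an underlying set `Q`:
a weight map `wt` with values in the weight lattice, partial quasi-Kashiwara operators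
`e i, f i : Q → Q ⊔ {⊥}` (realized as `Option`-valued maps, `none` playing the role
of `⊥`), and maps `ε i, φ i : Q → ℤ ∪ {+∞}` (realized as `WithTop ℤ`). -/
structure QC (S : QCSetting V ι) (Q : Type*) where
  wt : Q → S.Λ
  e : ι → Q → Option Q
  f : ι → Q → Option Q
  ε : ι → Q → WithTop ℤ
  φ : ι → Q → WithTop ℤ

/-- `k`-fold iteration of a partial map `g : Q → Option Q` starting at `x`. -/
def optIter {Q : Type*} (g : Q → Option Q) (k : ℕ) (x : Q) : Option Q :=
  (fun o => o.bind g)^[k] (some x)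

/-- The axioms of a seminormal quasi-crystal. -/
structure QC.IsSeminormal {S : QCSetting V ι} {Q : Type*} (𝒬 : QC S Q) : Prop where
  phi_eq : ∀ i x, 𝒬.φ i x = 𝒬.ε i x + ((S.pair (𝒬.wt x) i : ℤ) : WithTop ℤ)
  wt_e : ∀ i x y, 𝒬.e i x = some y → (𝒬.wt y : V) = (𝒬.wt x : V) + S.simple i
  wt_f : ∀ i x y, 𝒬.f i x = some y → (𝒬.wt y : V) = (𝒬.wt x : V) - S.simple i
  e_iff_f : ∀ i x y, 𝒬.e i x = some y ↔ 𝒬.f i y = some x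
  e_of_top : ∀ i x, 𝒬.ε i x = ⊤ → 𝒬.e i x = none
  f_of_top : ∀ i x, 𝒬.ε i x = ⊤ → 𝒬.f i x = none
  eps_spec : ∀ i x, 𝒬.ε i x ≠ ⊤ → ∃ n : ℕ, 𝒬.ε i x = ((n : ℤ) : WithTop ℤ) ∧
    IsGreatest {k : ℕ | (optIter (𝒬.e i) k x).isSome} n
  phi_spec : ∀ i x, 𝒬.ε i x ≠ ⊤ → ∃ n : ℕ, 𝒬.φ i x = ((n : ℤ) : WithTop ℤ) ∧
    IsGreatest {k : ℕ | (optIter (𝒬.f i) k x).isSome} n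

/-- A seminormal crystal is a seminormal quasi-crystal in which `ε i x ≠ +∞` always. -/
def QC.IsSeminormalCrystal {S : QCSetting V ι} {Q : Type*} (𝒬 : QC S Q) : Prop :=
  𝒬.IsSeminormal ∧ ∀ i x, 𝒬.ε i x ≠ ⊤

/-! ## Tensor product -/

/-- The tensor product of two quasi-crystals of the same type. -/
noncomputable def QC.tensor {S : QCSetting V ι} {Q Q' : Type*} (𝒬 : QC S Q) (𝒬' : QC S Q') :
    QC S (Q × Q') where
  wt p := 𝒬.wt p.1 + 𝒬'.wt p.2
  ε i p := max (𝒬.ε i p.1) (𝒬'.ε i p.2 + ((-(S.pair (𝒬.wt p.1) i) : ℤ) : WithTop ℤ))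
  φ i p := max (𝒬.φ i p.1 + ((S.pair (𝒬'.wt p.2) i : ℤ) : WithTop ℤ)) (𝒬'.φ i p.2)
  e i p := if 𝒬'.ε i p.2 ≤ 𝒬.φ i p.1
    then (𝒬.e i p.1).map (fun y => (y, p.2))
    else (𝒬'.e i p.2).map (fun y => (p.1, y))
  f i p := if 𝒬'.ε i p.2 < 𝒬.φ i p.1
    then (𝒬.f i p.1).map (fun y => (y, p.2))
    else (𝒬'.f i p.2).map (fun y => (p.1, y))

/-! ## Quasi-tensor product -/

/-- The (inverse-free) quasi-tensor product of two quasi-crystals of the same type. -/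
noncomputable def QC.qtensor {S : QCSetting V ι} {Q Q' : Type*} (𝒬 : QC S Q) (𝒬' : QC S Q') :
    QC S (Q × Q') where
  wt p := 𝒬.wt p.1 + 𝒬'.wt p.2
  ε i p := if 0 < 𝒬.φ i p.1 ∧ 0 < 𝒬'.ε i p.2 then ⊤
    else max (𝒬.ε i p.1) (𝒬'.ε i p.2 + ((-(S.pair (𝒬.wt p.1) i) : ℤ) : WithTop ℤ))
  φ i p := if 0 < 𝒬.φ i p.1 ∧ 0 < 𝒬'.ε i p.2 then ⊤
    else max (𝒬.φ i p.1 + ((S.pair (𝒬'.wt p.2) i : ℤ) : WithTop ℤ)) (𝒬'.φ i p.2)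
  e i p := if 0 < 𝒬.φ i p.1 ∧ 0 < 𝒬'.ε i p.2 then none
    else if 𝒬'.ε i p.2 ≤ 𝒬.φ i p.1 then (𝒬.e i p.1).map (fun y => (y, p.2))
    else (𝒬'.e i p.2).map (fun y => (p.1, y))
  f i p := if 0 < 𝒬.φ i p.1 ∧ 0 < 𝒬'.ε i p.2 then none
    else if 𝒬'.ε i p.2 < 𝒬.φ i p.1 then (𝒬.f i p.1).map (fun y => (y, p.2))
    else (𝒬'.f i p.2).map (fun y => (p.1, y))

/-! ## Homomorphisms -/

/-- A quasi-crystal homomorphism `ψ : 𝒬 → 𝒬'`, i.e. a map `Q ⊔ {⊥} → Q' ⊔ {⊥}`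
(realized on `Option`s, `none` playing the role of `⊥`) compatible with the structure
maps in the appropriate sense. -/
structure QCHom {S : QCSetting V ι} {Q Q' : Type*} (𝒬 : QC S Q) (𝒬' : QC S Q') where
  toFun : Option Q → Option Q'
  map_none : toFun none = none
  wt_eq : ∀ x y, toFun (some x) = some y → 𝒬'.wt y = 𝒬.wt x
  eps_eq : ∀ i x y, toFun (some x) = some y → 𝒬'.ε i y = 𝒬.ε i x
  phi_eq : ∀ i x y, toFun (some x) = some y → 𝒬'.φ i y = 𝒬.φ i x
  comm_e : ∀ i x x' y y', 𝒬.e i x = some x' → toFun (some x) = some y →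
    toFun (some x') = some y' → 𝒬'.e i y = some y'
  comm_f : ∀ i x x' y y', 𝒬.f i x = some x' → toFun (some x) = some y →
    toFun (some x') = some y' → 𝒬'.f i y = some y'

/-! ## The free `⊗`-quasi-crystal monoid -/

/-- Weight of a word: the sum of the weights of its letters. -/
def freeWt {S : QCSetting V ι} {Q : Type*} (𝒬 : QC S Q) : List Q → S.Λ
  | [] => 0
  | x :: w => 𝒬.wt x + freeWt 𝒬 w

/-- The map `ε̈_i` of the free `⊗`-quasi-crystal monoid. -/
def freeEps {S : QCSetting V ι} {Q : Type*} (𝒬 : QC S Q) (i : ι) : List Q → WithTop ℤ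
  | [] => 0
  | x :: w => max (𝒬.ε i x) (freeEps 𝒬 i w + ((-(S.pair (𝒬.wt x) i) : ℤ) : WithTop ℤ))

/-- The map `φ̈_i` of the free `⊗`-quasi-crystal monoid. -/
def freePhi {S : QCSetting V ι} {Q : Type*} (𝒬 : QC S Q) (i : ι) : List Q → WithTop ℤ
  | [] => 0
  | x :: w => max (𝒬.φ i x + ((S.pair (freeWt 𝒬 w) i : ℤ) : WithTop ℤ)) (freePhi 𝒬 i w)

/-- The operator `ë_i` of the free `⊗`-quasi-crystal monoid. -/
noncomputable def freeE {S : QCSetting V ι} {Q : Type*} (𝒬 : QC S Q) (i : ι) : List Q → Option (List Q)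
  | [] => none
  | x :: w => if freeEps 𝒬 i w ≤ 𝒬.φ i x
      then (𝒬.e i x).map (· :: w)
      else (freeE 𝒬 i w).map (x :: ·)

/-- The operator `f̈_i` of the free `⊗`-quasi-crystal monoid. -/
noncomputable def freeF {S : QCSetting V ι} {Q : Type*} (𝒬 : QC S Q) (i : ι) : List Q → Option (List Q)
  | [] => none
  | x :: w => if freeEps 𝒬 i w < 𝒬.φ i x
      then (𝒬.f i x).map (· :: w)
      else (freeF 𝒬 i w).map (x :: ·)

/-- The quasi-crystal structure of the free `⊗`-quasi-crystal monoid `F^⊗(𝒬)`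
on the free monoid `Q*`. -/
noncomputable def freeTensorQC {S : QCSetting V ι} {Q : Type*} (𝒬 : QC S Q) : QC S (FreeMonoid Q) where
  wt w := freeWt 𝒬 (FreeMonoid.toList w)
  ε i w := freeEps 𝒬 i (FreeMonoid.toList w)
  φ i w := freePhi 𝒬 i (FreeMonoid.toList w)
  e i w := (freeE 𝒬 i (FreeMonoid.toList w)).map (fun l => FreeMonoid.ofList l)
  f i w := (freeF 𝒬 i (FreeMonoid.toList w)).map (fun l => FreeMonoid.ofList l)

/-! ## The free `⊗̈`-quasi-crystal monoid -/

/-- The map `ε̈_i` of the free `⊗̈`-quasi-crystal monoid. -/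
noncomputable def qfreeEps {S : QCSetting V ι} {Q : Type*} (𝒬 : QC S Q) (i : ι) : List Q → WithTop ℤ
  | [] => 0
  | x :: w => if 0 < 𝒬.φ i x ∧ 0 < qfreeEps 𝒬 i w then ⊤
      else max (𝒬.ε i x) (qfreeEps 𝒬 i w + ((-(S.pair (𝒬.wt x) i) : ℤ) : WithTop ℤ))

/-- The map `φ̈_i` of the free `⊗̈`-quasi-crystal monoid. -/
noncomputable def qfreePhi {S : QCSetting V ι} {Q : Type*} (𝒬 : QC S Q) (i : ι) : List Q → WithTop ℤ
  | [] => 0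
  | x :: w => if 0 < 𝒬.φ i x ∧ 0 < qfreeEps 𝒬 i w then ⊤
      else max (𝒬.φ i x + ((S.pair (freeWt 𝒬 w) i : ℤ) : WithTop ℤ)) (qfreePhi 𝒬 i w)

/-- The operator `ë_i` of the free `⊗̈`-quasi-crystal monoid. -/
noncomputable def qfreeE {S : QCSetting V ι} {Q : Type*} (𝒬 : QC S Q) (i : ι) : List Q → Option (List Q)
  | [] => none
  | x :: w => if 0 < 𝒬.φ i x ∧ 0 < qfreeEps 𝒬 i w then none
      else if qfreeEps 𝒬 i w ≤ 𝒬.φ i x then (𝒬.e i x).map (· :: w)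
      else (qfreeE 𝒬 i w).map (x :: ·)

/-- The operator `f̈_i` of the free `⊗̈`-quasi-crystal monoid. -/
noncomputable def qfreeF {S : QCSetting V ι} {Q : Type*} (𝒬 : QC S Q) (i : ι) : List Q → Option (List Q)
  | [] => none
  | x :: w => if 0 < 𝒬.φ i x ∧ 0 < qfreeEps 𝒬 i w then none
      else if qfreeEps 𝒬 i w < 𝒬.φ i x then (𝒬.f i x).map (· :: w)
      else (qfreeF 𝒬 i w).map (x :: ·)

/-- The quasi-crystal structure of the free `⊗̈`-quasi-crystal monoid `F^⊗̈(𝒬)`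
on the free monoid `Q*`. -/
noncomputable def freeQTensorQC {S : QCSetting V ι} {Q : Type*} (𝒬 : QC S Q) : QC S (FreeMonoid Q) where
  wt w := freeWt 𝒬 (FreeMonoid.toList w)
  ε i w := qfreeEps 𝒬 i (FreeMonoid.toList w)
  φ i w := qfreePhi 𝒬 i (FreeMonoid.toList w)
  e i w := (qfreeE 𝒬 i (FreeMonoid.toList w)).map (fun l => FreeMonoid.ofList l)
  f i w := (qfreeF 𝒬 i (FreeMonoid.toList w)).map (fun l => FreeMonoid.ofList l)

/-! ## Connected components, plactic and hypoplactic congruences -/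

/-- Two elements are connected in the quasi-crystal graph if they are related by the
reflexive-symmetric-transitive closure of the edge relation given by the
quasi-Kashiwara operators. -/
def QC.conn {S : QCSetting V ι} {Q : Type*} (𝒬 : QC S Q) : Q → Q → Prop :=
  Relation.EqvGen (fun x y => ∃ i, 𝒬.f i x = some y ∨ 𝒬.f i y = some x ∨
    𝒬.e i x = some y ∨ 𝒬.e i y = some x)

/-- The connected component `𝒬(x)` of a quasi-crystal `𝒬` containing `x`, as a
quasi-crystal on the subtype of elements connected with `x`. -/
def QC.compQC {S : QCSetting V ι} {Q : Type*} (𝒬 : QC S Q) (x : Q) :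
    QC S {y : Q // 𝒬.conn x y} where
  wt y := 𝒬.wt y.1
  ε i y := 𝒬.ε i y.1
  φ i y := 𝒬.φ i y.1
  e i y := (𝒬.e i y.1).pmap (fun z hz => (⟨z, hz⟩ : {y : Q // 𝒬.conn x y}))
    (fun z hz => Relation.EqvGen.trans _ _ _ y.2
      (Relation.EqvGen.rel _ _ ⟨i, Or.inr (Or.inr (Or.inl hz))⟩))
  f i y := (𝒬.f i y.1).pmap (fun z hz => (⟨z, hz⟩ : {y : Q // 𝒬.conn x y}))
    (fun z hz => Relation.EqvGen.trans _ _ _ y.2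
      (Relation.EqvGen.rel _ _ ⟨i, Or.inl hz⟩))

/-- The plactic congruence: `u ≈ v` iff there is a quasi-crystal isomorphism between the
connected components of `u` and `v` in `F^⊗(𝒬)` mapping `u` to `v`. -/
def placticRel {S : QCSetting V ι} {Q : Type*} (𝒬 : QC S Q)
    (u v : FreeMonoid Q) : Prop :=
  ∃ ψ : QCHom ((freeTensorQC 𝒬).compQC u) ((freeTensorQC 𝒬).compQC v),
    Function.Bijective ψ.toFun ∧
    ψ.toFun (some ⟨u, Relation.EqvGen.refl u⟩) = some ⟨v, Relation.EqvGen.refl v⟩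

/-- The hypoplactic congruence: `u ∼̈ v` iff there is a quasi-crystal isomorphism between
the connected components of `u` and `v` in `F^⊗̈(𝒬)` mapping `u` to `v`. -/
def hypoRel {S : QCSetting V ι} {Q : Type*} (𝒬 : QC S Q)
    (u v : FreeMonoid Q) : Prop :=
  ∃ ψ : QCHom ((freeQTensorQC 𝒬).compQC u) ((freeQTensorQC 𝒬).compQC v),
    Function.Bijective ψ.toFun ∧
    ψ.toFun (some ⟨u, Relation.EqvGen.refl u⟩) = some ⟨v, Relation.EqvGen.refl v⟩

/-! ## Quasi-crystal monoids -/

/-- A monoid is equidivisible if whenever `x₁y₁ = x₂y₂` one of the factorizations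
refines the other. -/
def Equidivisible (M : Type*) [Monoid M] : Prop :=
  ∀ x₁ x₂ y₁ y₂ : M, x₁ * y₁ = x₂ * y₂ →
    ∃ z : M, (x₂ = x₁ * z ∧ y₁ = z * y₂) ∨ (x₁ = x₂ * z ∧ y₂ = z * y₁)

/-- A `⊗`-quasi-crystal monoid: a seminormal quasi-crystal structure on a monoid whose
structure maps interact with the multiplication by the tensor-product rules. -/
structure IsTensorQCMon {S : QCSetting V ι} {M : Type*} [Monoid M] (𝒬 : QC S M) : Prop where
  seminormal : 𝒬.IsSeminormal
  wt_mul : ∀ x y, 𝒬.wt (x * y) = 𝒬.wt x + 𝒬.wt y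
  eps_mul : ∀ i x y, 𝒬.ε i (x * y) =
    max (𝒬.ε i x) (𝒬.ε i y + ((-(S.pair (𝒬.wt x) i) : ℤ) : WithTop ℤ))
  phi_mul : ∀ i x y, 𝒬.φ i (x * y) =
    max (𝒬.φ i x + ((S.pair (𝒬.wt y) i : ℤ) : WithTop ℤ)) (𝒬.φ i y)
  e_mul : ∀ i x y, 𝒬.e i (x * y) =
    if 𝒬.ε i y ≤ 𝒬.φ i x then (𝒬.e i x).map (· * y) else (𝒬.e i y).map (x * ·)
  f_mul : ∀ i x y, 𝒬.f i (x * y) =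
    if 𝒬.ε i y < 𝒬.φ i x then (𝒬.f i x).map (· * y) else (𝒬.f i y).map (x * ·)

/-- A `⊗̈`-quasi-crystal monoid: a seminormal quasi-crystal structure on a monoid such
that `x ⊗̈ y ↦ x·y` induces a quasi-crystal homomorphism `M ⊗̈ M → M`. -/
def IsQTensorQCMon {S : QCSetting V ι} {M : Type*} [Monoid M] (𝒬 : QC S M) : Prop :=
  𝒬.IsSeminormal ∧
  ∃ ψ : QCHom (𝒬.qtensor 𝒬) 𝒬, ψ.toFun = Option.map (fun p => p.1 * p.2)

/-! ## The bicyclic monoid with zero `B₀` and the monoid `Z₀` -/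

/-- The bicyclic monoid `⟨−, + | (+)(−) = ε⟩`: elements are normal forms `(−)^a(+)^b`. -/
structure Bic where
  neg : ℕ
  pos : ℕ
deriving DecidableEq

instance : Mul Bic :=
  ⟨fun x y => ⟨x.neg + (y.neg - x.pos), y.pos + (x.pos - y.neg)⟩⟩

theorem Bic.mul_def (x y : Bic) :
    x * y = ⟨x.neg + (y.neg - x.pos), y.pos + (x.pos - y.neg)⟩ := rfl

instance : One Bic := ⟨⟨0, 0⟩⟩

theorem Bic.one_def : (1 : Bic) = ⟨0, 0⟩ := rfl

instance : Monoid Bic where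
  mul_assoc x y z := by
    simp only [Bic.mul_def, Bic.mk.injEq]
    omega
  one_mul x := by
    simp only [Bic.one_def, Bic.mul_def]
    cases x
    simp only [Bic.mk.injEq]
    omega
  mul_one x := by
    simp only [Bic.one_def, Bic.mul_def]
    cases x
    simp only [Bic.mk.injEq]
    omega

/-- The bicyclic monoid with a zero element adjoined,
`B₀ = ⟨0, −, + | (+)(−) = ε, 0x = x0 = 0⟩`. -/
abbrev B0 : Type := WithZero Bic

/-- The monoid `Z₀ = ⟨0, −, + | (+)(−) = 0, 0x = x0 = 0⟩`: the nonzero elements are the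
normal forms `(−)^a(+)^b`. -/
inductive Z0 : Type
  | zero : Z0
  | word : ℕ → ℕ → Z0
deriving DecidableEq

instance : Mul Z0 :=
  ⟨fun x y => match x, y with
    | Z0.zero, _ => Z0.zero
    | _, Z0.zero => Z0.zero
    | Z0.word a b, Z0.word c d =>
        if 0 < b ∧ 0 < c then Z0.zero else Z0.word (a + c) (b + d)⟩

instance : One Z0 := ⟨Z0.word 0 0⟩

instance : Zero Z0 := ⟨Z0.zero⟩

theorem Z0.one_def : (1 : Z0) = Z0.word 0 0 := rfl
theorem Z0.zero_def : (0 : Z0) = Z0.zero := rfl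
theorem Z0.zero_mul' (x : Z0) : Z0.zero * x = Z0.zero := by cases x <;> rfl
theorem Z0.mul_zero' (x : Z0) : x * Z0.zero = Z0.zero := by cases x <;> rfl
theorem Z0.word_mul_word (a b c d : ℕ) :
    Z0.word a b * Z0.word c d =
      if 0 < b ∧ 0 < c then Z0.zero else Z0.word (a + c) (b + d) := rfl

instance : MonoidWithZero Z0 where
  mul_assoc x y z := by
    cases x <;> cases y <;> cases z <;>
      simp only [Z0.zero_mul', Z0.mul_zero', Z0.word_mul_word]
    · split_ifs <;> simp_all [Z0.zero_mul', Z0.mul_zero', Z0.word_mul_word] <;>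
        split_ifs <;> simp_all <;> omega
  one_mul x := by
    cases x
    · rfl
    · simp [Z0.one_def, Z0.word_mul_word]
  mul_one x := by
    cases x
    · rfl
    · simp [Z0.one_def, Z0.word_mul_word]
  zero_mul x := by cases x <;> rfl
  mul_zero x := by cases x <;> rfl

/-! ## Signature maps -/

/-- The `i`-signature map for the tensor product `⊗`:
`sgn_i^⊗(w) = 0` if `ε̈_i(w) = +∞`, and `(−)^{ε̈_i(w)}(+)^{φ̈_i(w)}` otherwise. -/
noncomputable def tsgn {V : Type*} [NormedAddCommGroup V] [InnerProductSpace ℝ V] {ι : Type*}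
    {S : QCSetting V ι} {Q : Type*} (𝒬 : QC S Q) (i : ι) (w : FreeMonoid Q) : B0 :=
  if freeEps 𝒬 i (FreeMonoid.toList w) = ⊤ then 0
  else ↑(Bic.mk (WithTop.untopD 0 (freeEps 𝒬 i (FreeMonoid.toList w))).toNat
      (WithTop.untopD 0 (freePhi 𝒬 i (FreeMonoid.toList w))).toNat)

/-- The `i`-signature map for the quasi-tensor product `⊗̈`:
`sgn_i^⊗̈(w) = 0` if `ε̈_i(w) = +∞`, and `(−)^{ε̈_i(w)}(+)^{φ̈_i(w)}` otherwise. -/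
noncomputable def qsgn {V : Type*} [NormedAddCommGroup V] [InnerProductSpace ℝ V] {ι : Type*}
    {S : QCSetting V ι} {Q : Type*} (𝒬 : QC S Q) (i : ι) (w : FreeMonoid Q) : Z0 :=
  if qfreeEps 𝒬 i (FreeMonoid.toList w) = ⊤ then 0
  else Z0.word (WithTop.untopD 0 (qfreeEps 𝒬 i (FreeMonoid.toList w))).toNat
      (WithTop.untopD 0 (qfreePhi 𝒬 i (FreeMonoid.toList w))).toNat

/-! ## Auxiliary lemmas -/

section Aux

lemma optIter_one' {Q : Type*} (g : Q → Option Q) (x : Q) : optIter g 1 x = g x := by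
  simp [optIter]

lemma optIter_succ'' {Q : Type*} (g : Q → Option Q) (k : ℕ) (x : Q) :
    optIter g (k+1) x = (optIter g k x).bind g := by
  simp [optIter, Function.iterate_succ_apply']

lemma optIter_succ_of_eq {Q : Type*} {g : Q → Option Q} {x y : Q} (hxy : g x = some y) (k : ℕ) :
    optIter g (k+1) x = optIter g k y := by
  simp [optIter, Function.iterate_succ_apply, hxy]

lemma optIter_isSome_of_succ {Q : Type*} {g : Q → Option Q} {k : ℕ} {x : Q}
    (hk : (optIter g (k+1) x).isSome) : (optIter g k x).isSome := by
  rw [optIter_succ''] at hk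
  cases ho : optIter g k x <;> simp [ho] at hk ⊢

lemma optIter_isSome_mono {Q : Type*} {g : Q → Option Q} {x : Q} {k m : ℕ}
    (hkm : k ≤ m) (hm : (optIter g m x).isSome) : (optIter g k x).isSome := by
  induction m with
  | zero => simpa [Nat.le_zero.mp hkm] using hm
  | succ m ih =>
    rcases Nat.lt_or_ge k (m+1) with hlt | hge
    · exact ih (Nat.lt_succ_iff.mp hlt) (optIter_isSome_of_succ hm)
    · have : k = m + 1 := le_antisymm hkm hge
      simpa [this] using hm

variable {S : QCSetting V ι} {Q : Type*} {𝒬 : QC S Q}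

lemma QCSetting.pair_add (S : QCSetting V ι) (v w : S.Λ) (i : ι) :
    S.pair (v + w) i = S.pair v i + S.pair w i := by
  have h1 := S.pair_spec v i
  have h2 := S.pair_spec w i
  have h3 := S.pair_spec (v + w) i
  have : ((S.pair (v + w) i : ℤ) : ℝ) = ((S.pair v i + S.pair w i : ℤ) : ℝ) := by
    push_cast
    rw [h1, h2, h3]
    have : ((v + w : S.Λ) : V) = (v : V) + (w : V) := rfl
    rw [this, inner_add_left, mul_add, add_div]
  exact_mod_cast this

lemma QCSetting.pair_zero (S : QCSetting V ι) (i : ι) : S.pair 0 i = 0 := by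
  have := S.pair_add 0 0 i
  rw [add_zero] at this
  omega

lemma QCSetting.pair_neg (S : QCSetting V ι) (v : S.Λ) (i : ι) :
    S.pair (-v) i = -S.pair v i := by
  have := S.pair_add v (-v) i
  rw [add_neg_cancel, S.pair_zero] at this
  omega

lemma QCSetting.simple_ne_zero (S : QCSetting V ι) (i : ι) : S.simple i ≠ 0 :=
  S.simple_indep.ne_zero i

/-- The simple root `α_i` as an element of the weight lattice. -/
def QCSetting.simpleΛ (S : QCSetting V ι) (i : ι) : S.Λ :=
  ⟨S.simple i, S.root_mem_lattice _ (S.simple_mem i)⟩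

lemma QCSetting.pair_simpleΛ (S : QCSetting V ι) (i : ι) : S.pair (S.simpleΛ i) i = 2 := by
  have h := S.pair_spec (S.simpleΛ i) i
  have hne : (inner ℝ (S.simple i) (S.simple i) : ℝ) ≠ 0 := by
    simpa [inner_self_eq_zero] using S.simple_ne_zero i
  have : ((S.pair (S.simpleΛ i) i : ℤ) : ℝ) = ((2 : ℤ) : ℝ) := by
    rw [h]
    show 2 * (inner ℝ (S.simple i) (S.simple i) : ℝ) / _ = _
    field_simp
    norm_num
  exact_mod_cast this

namespace QC.IsSeminormal

variable (h : 𝒬.IsSeminormal)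
include h

lemma eps_cases (i : ι) (x : Q) : 𝒬.ε i x = ⊤ ∨ ∃ n : ℕ, 𝒬.ε i x = ((n : ℤ) : WithTop ℤ) := by
  by_cases hne : 𝒬.ε i x = ⊤
  · exact Or.inl hne
  · obtain ⟨n, hn, -⟩ := h.eps_spec i x hne
    exact Or.inr ⟨n, hn⟩

lemma eps_nonneg (i : ι) (x : Q) : 0 ≤ 𝒬.ε i x := by
  rcases h.eps_cases i x with he | ⟨n, hn⟩
  · simp [he]
  · rw [hn]
    exact_mod_cast Int.ofNat_nonneg n

lemma phi_top (i : ι) (x : Q) (he : 𝒬.ε i x = ⊤) : 𝒬.φ i x = ⊤ := by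
  rw [h.phi_eq i x, he, top_add]

lemma phi_ne_top (i : ι) (x : Q) (he : 𝒬.ε i x ≠ ⊤) : 𝒬.φ i x ≠ ⊤ := by
  rw [h.phi_eq i x]
  simp [WithTop.add_eq_top, he]

lemma phi_nonneg (i : ι) (x : Q) : 0 ≤ 𝒬.φ i x := by
  by_cases hne : 𝒬.ε i x = ⊤
  · simp [h.phi_top i x hne]
  · obtain ⟨n, hn, -⟩ := h.phi_spec i x hne
    rw [hn]
    exact_mod_cast Int.ofNat_nonneg n

lemma f_isSome_iff (i : ι) (x : Q) :
    (𝒬.f i x).isSome ↔ (𝒬.ε i x ≠ ⊤ ∧ 0 < 𝒬.φ i x) := by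
  constructor
  · intro hs
    have hne : 𝒬.ε i x ≠ ⊤ := by
      intro htop
      rw [h.f_of_top i x htop] at hs
      simp at hs
    refine ⟨hne, ?_⟩
    obtain ⟨n, hn, hgr⟩ := h.phi_spec i x hne
    have h1 : 1 ∈ {k : ℕ | (optIter (𝒬.f i) k x).isSome} := by
      simpa [optIter_one'] using hs
    have := hgr.2 h1
    rw [hn]
    exact_mod_cast this
  · rintro ⟨hne, hpos⟩
    obtain ⟨n, hn, hgr⟩ := h.phi_spec i x hne
    have hn1 : 1 ≤ n := by
      rw [hn] at hpos
      exact_mod_cast hpos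
    have := optIter_isSome_mono hn1 hgr.1
    simpa [optIter_one'] using this

lemma e_isSome_iff (i : ι) (x : Q) :
    (𝒬.e i x).isSome ↔ (𝒬.ε i x ≠ ⊤ ∧ 0 < 𝒬.ε i x) := by
  constructor
  · intro hs
    have hne : 𝒬.ε i x ≠ ⊤ := by
      intro htop
      rw [h.e_of_top i x htop] at hs
      simp at hs
    refine ⟨hne, ?_⟩
    obtain ⟨n, hn, hgr⟩ := h.eps_spec i x hne
    have h1 : 1 ∈ {k : ℕ | (optIter (𝒬.e i) k x).isSome} := by
      simpa [optIter_one'] using hs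
    have := hgr.2 h1
    rw [hn]
    exact_mod_cast this
  · rintro ⟨hne, hpos⟩
    obtain ⟨n, hn, hgr⟩ := h.eps_spec i x hne
    have hn1 : 1 ≤ n := by
      rw [hn] at hpos
      exact_mod_cast hpos
    have := optIter_isSome_mono hn1 hgr.1
    simpa [optIter_one'] using this

lemma eps_of_e {i : ι} {x y : Q} (hxy : 𝒬.e i x = some y) {n : ℕ}
    (hx : 𝒬.ε i x = ((n + 1 : ℕ) : ℤ)) :
    ∃ m : ℕ, 𝒬.ε i y = ((m : ℤ) : WithTop ℤ) ∧ n ≤ m := by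
  have hfy : (𝒬.f i y).isSome := by
    rw [(h.e_iff_f i x y).mp hxy]
    rfl
  have hney : 𝒬.ε i y ≠ ⊤ := ((h.f_isSome_iff i y).mp hfy).1
  obtain ⟨m, hm, hgr⟩ := h.eps_spec i y hney
  refine ⟨m, hm, ?_⟩
  have hnex : 𝒬.ε i x ≠ ⊤ := by rw [hx]; exact WithTop.coe_ne_top
  obtain ⟨n', hn', hgrx⟩ := h.eps_spec i x hnex
  have hnn : n' = n + 1 := by
    rw [hn'] at hx
    exact_mod_cast hx
  have hmem : (optIter (𝒬.e i) (n + 1) x).isSome := by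
    rw [← hnn]; exact hgrx.1
  rw [optIter_succ_of_eq hxy] at hmem
  exact hgr.2 hmem

lemma phi_of_f {i : ι} {x z : Q} (hxz : 𝒬.f i x = some z) {n : ℕ}
    (hx : 𝒬.φ i x = ((n + 1 : ℕ) : ℤ)) :
    ∃ m : ℕ, 𝒬.φ i z = ((m : ℤ) : WithTop ℤ) ∧ n ≤ m := by
  have hez : (𝒬.e i z).isSome := by
    rw [(h.e_iff_f i z x).mpr hxz]
    rfl
  have hnez : 𝒬.ε i z ≠ ⊤ := ((h.e_isSome_iff i z).mp hez).1
  obtain ⟨m, hm, hgr⟩ := h.phi_spec i z hnez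
  refine ⟨m, hm, ?_⟩
  have hnex : 𝒬.ε i x ≠ ⊤ := by
    intro htop
    rw [h.phi_top i x htop] at hx
    exact (WithTop.coe_ne_top hx.symm).elim
  obtain ⟨n', hn', hgrx⟩ := h.phi_spec i x hnex
  have hnn : n' = n + 1 := by
    rw [hn'] at hx
    exact_mod_cast hx
  have hmem : (optIter (𝒬.f i) (n + 1) x).isSome := by
    rw [← hnn]; exact hgrx.1
  rw [optIter_succ_of_eq hxz] at hmem
  exact hgr.2 hmem

end QC.IsSeminormal

end Aux
section LetterLemma

variable {S : QCSetting V ι} {Q : Type*} {𝒬 : QC S Q}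

lemma QC.hli_contra
    (hli : LinearIndependent ℝ ((↑) : (Set.range fun x : Q => ((𝒬.wt x : V))) → V))
    {x y z : Q} {i : ι}
    (hy : (𝒬.wt y : V) = (𝒬.wt x : V) + S.simple i)
    (hz : (𝒬.wt z : V) = (𝒬.wt x : V) - S.simple i) : False := by
  set s : Set V := Set.range fun x : Q => ((𝒬.wt x : V)) with hs
  have hα : S.simple i ≠ 0 := S.simple_ne_zero i
  let a : s := ⟨(𝒬.wt y : V), ⟨y, rfl⟩⟩
  let b : s := ⟨(𝒬.wt x : V), ⟨x, rfl⟩⟩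
  let c : s := ⟨(𝒬.wt z : V), ⟨z, rfl⟩⟩
  have hab : a ≠ b := by
    intro hab
    have h1 : (𝒬.wt x : V) + S.simple i = (𝒬.wt x : V) := by
      rw [← hy]; exact congrArg (fun t : {v // v ∈ s} => (t : V)) hab
    exact hα (by simpa using h1)
  have hcb : c ≠ b := by
    intro hcb
    have h1 : (𝒬.wt x : V) - S.simple i = (𝒬.wt x : V) := by
      rw [← hz]; exact congrArg (fun t : {v // v ∈ s} => (t : V)) hcb
    exact hα (by simpa [sub_eq_self] using h1)
  set l : s →₀ ℝ :=
    Finsupp.single a 1 + Finsupp.single c 1 + Finsupp.single b (-2) with hl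
  have htot : Finsupp.linearCombination ℝ ((↑) : s → V) l = 0 := by
    rw [hl]
    simp only [map_add, Finsupp.linearCombination_single, one_smul]
    show (𝒬.wt y : V) + (𝒬.wt z : V) + (-2 : ℝ) • (𝒬.wt x : V) = 0
    rw [hy, hz]
    have : (-2 : ℝ) • (𝒬.wt x : V) = -((𝒬.wt x : V) + (𝒬.wt x : V)) := by
      rw [neg_smul, two_smul]
    rw [this]
    abel
  have hl0 : l = 0 := linearIndependent_iff.mp hli l htot
  have hlb : l b = -2 := by
    rw [hl]
    simp [Finsupp.single_apply, hab, hcb]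
  rw [hl0] at hlb
  norm_num at hlb

lemma QC.IsSeminormal.not_both_pos (h : 𝒬.IsSeminormal)
    (hli : LinearIndependent ℝ ((↑) : (Set.range fun x : Q => ((𝒬.wt x : V))) → V))
    (i : ι) (x : Q) (hne : 𝒬.ε i x ≠ ⊤) :
    ¬(0 < 𝒬.ε i x ∧ 0 < 𝒬.φ i x) := by
  rintro ⟨he, hf⟩
  obtain ⟨y, hy⟩ := Option.isSome_iff_exists.mp ((h.e_isSome_iff i x).mpr ⟨hne, he⟩)
  obtain ⟨z, hz⟩ := Option.isSome_iff_exists.mp ((h.f_isSome_iff i x).mpr ⟨hne, hf⟩)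
  exact QC.hli_contra hli (h.wt_e i x y hy) (h.wt_f i x z hz)

lemma QC.IsSeminormal.letter_cases (h : 𝒬.IsSeminormal)
    (hli : LinearIndependent ℝ ((↑) : (Set.range fun x : Q => ((𝒬.wt x : V))) → V))
    (i : ι) (x : Q) (hne : 𝒬.ε i x ≠ ⊤) :
    (𝒬.ε i x = 0 ∧ 𝒬.φ i x = 0 ∧ S.pair (𝒬.wt x) i = 0) ∨
    (𝒬.ε i x = 1 ∧ 𝒬.φ i x = 0 ∧ S.pair (𝒬.wt x) i = -1) ∨
    (𝒬.ε i x = 0 ∧ 𝒬.φ i x = 1 ∧ S.pair (𝒬.wt x) i = 1) := by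
  obtain ⟨n, hn, -⟩ := h.eps_spec i x hne
  obtain ⟨m, hm, -⟩ := h.phi_spec i x hne
  set p : ℤ := S.pair (𝒬.wt x) i with hp
  have hpeq : (m : ℤ) = (n : ℤ) + p := by
    have h0 := h.phi_eq i x
    rw [hm, hn] at h0
    exact_mod_cast h0
  have hnotboth : ¬(0 < n ∧ 0 < m) := by
    rintro ⟨hn0, hm0⟩
    refine h.not_both_pos hli i x hne ⟨?_, ?_⟩
    · rw [hn]; exact_mod_cast (by exact_mod_cast hn0 : (0:ℤ) < (n:ℤ))
    · rw [hm]; exact_mod_cast (by exact_mod_cast hm0 : (0:ℤ) < (m:ℤ))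
  have hn1 : n ≤ 1 := by
    by_contra hn2
    push_neg at hn2
    have hm0 : m = 0 := by omega
    have hepos : 0 < 𝒬.ε i x := by
      rw [hn]; exact_mod_cast (by omega : (0:ℤ) < (n:ℤ))
    obtain ⟨y, hy⟩ := Option.isSome_iff_exists.mp ((h.e_isSome_iff i x).mpr ⟨hne, hepos⟩)
    have hxeq : 𝒬.ε i x = (((n - 1) + 1 : ℕ) : ℤ) := by
      rw [hn]; congr 1; omega
    obtain ⟨m', hm', hmge⟩ := h.eps_of_e hy hxeq
    have hwty : 𝒬.wt y = 𝒬.wt x + S.simpleΛ i := by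
      apply Subtype.ext
      rw [h.wt_e i x y hy]; rfl
    have hpy : S.pair (𝒬.wt y) i = p + 2 := by
      rw [hwty, S.pair_add, S.pair_simpleΛ, hp]
    have hphiy : 𝒬.φ i y = (((m' : ℤ) + p + 2 : ℤ) : WithTop ℤ) := by
      rw [h.phi_eq i y, hm', hpy]
      rw [← WithTop.coe_add]
      congr 1
      ring
    refine h.not_both_pos hli i y (by rw [hm']; exact WithTop.coe_ne_top) ⟨?_, ?_⟩
    · rw [hm']; exact_mod_cast (by omega : (0:ℤ) < (m':ℤ))
    · rw [hphiy]; exact_mod_cast (by omega : (0:ℤ) < ((m':ℤ) + p + 2))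
  have hm1 : m ≤ 1 := by
    by_contra hm2
    push_neg at hm2
    have hn0 : n = 0 := by omega
    have hfpos : 0 < 𝒬.φ i x := by
      rw [hm]; exact_mod_cast (by omega : (0:ℤ) < (m:ℤ))
    obtain ⟨z, hz⟩ := Option.isSome_iff_exists.mp ((h.f_isSome_iff i x).mpr ⟨hne, hfpos⟩)
    have hxeq : 𝒬.φ i x = (((m - 1) + 1 : ℕ) : ℤ) := by
      rw [hm]; congr 1; omega
    obtain ⟨m', hm', hmge⟩ := h.phi_of_f hz hxeq
    have hwtz : 𝒬.wt z = 𝒬.wt x + (- S.simpleΛ i) := by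
      apply Subtype.ext
      rw [h.wt_f i x z hz]
      show _ = (𝒬.wt x : V) + (-(S.simple i))
      abel
    have hpz : S.pair (𝒬.wt z) i = p - 2 := by
      rw [hwtz, S.pair_add, S.pair_neg, S.pair_simpleΛ, hp]
      ring
    have hnez : 𝒬.ε i z ≠ ⊤ := by
      intro htop
      have h0 := h.phi_eq i z
      rw [hm', htop, top_add] at h0
      exact WithTop.coe_ne_top h0
    obtain ⟨k, hk, -⟩ := h.eps_spec i z hnez
    have hkeq : (m' : ℤ) = (k : ℤ) + (p - 2) := by
      have h0 := h.phi_eq i z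
      rw [hm', hk, hpz] at h0
      exact_mod_cast h0
    refine h.not_both_pos hli i z hnez ⟨?_, ?_⟩
    · rw [hk]; exact_mod_cast (by omega : (0:ℤ) < (k:ℤ))
    · rw [hm']; exact_mod_cast (by omega : (0:ℤ) < (m':ℤ))
  -- now n, m ∈ {0,1}, not both positive
  have hp01 : p = (m : ℤ) - (n : ℤ) := by omega
  rcases Nat.le_one_iff_eq_zero_or_eq_one.mp hn1 with hn0 | hn0 <;>
    rcases Nat.le_one_iff_eq_zero_or_eq_one.mp hm1 with hm0 | hm0
  · exact Or.inl ⟨by rw [hn, hn0]; simp, by rw [hm, hm0]; simp, by omega⟩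
  · exact Or.inr (Or.inr ⟨by rw [hn, hn0]; simp, by rw [hm, hm0]; simp, by omega⟩)
  · exact Or.inr (Or.inl ⟨by rw [hn, hn0]; simp, by rw [hm, hm0]; simp, by omega⟩)
  · exact absurd ⟨by omega, by omega⟩ hnotboth

end LetterLemma
section FreeLemmas

variable {S : QCSetting V ι} {Q : Type*} {𝒬 : QC S Q}

lemma wtop_coe_add' (a b : ℤ) : ((a : WithTop ℤ)) + (b : WithTop ℤ) = ((a + b : ℤ) : WithTop ℤ) :=
  (WithTop.coe_add a b).symm

lemma wtop_add_coe_eq_top (a : WithTop ℤ) (c : ℤ) : a + (c : WithTop ℤ) = ⊤ ↔ a = ⊤ := by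
  simp [WithTop.add_eq_top]

lemma wtop_max_add (a b : WithTop ℤ) (c : ℤ) :
    max (a + (c : WithTop ℤ)) b = max a (b + ((-c : ℤ) : WithTop ℤ)) + (c : WithTop ℤ) := by
  induction a using WithTop.recTopCoe with
  | top => simp
  | coe a =>
    induction b using WithTop.recTopCoe with
    | top => simp
    | coe b =>
      simp only [wtop_coe_add', ← WithTop.coe_max, WithTop.coe_inj]
      rw [max_def, max_def]
      split_ifs <;> omega

lemma opt_isSome_map {A B : Type*} (f : A → B) (o : Option A) :
    (Option.map f o).isSome = o.isSome := by cases o <;> rfl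

namespace QC.IsSeminormal

variable (h : 𝒬.IsSeminormal) (i : ι)
include h

lemma freeEps_nonneg : ∀ w : List Q, 0 ≤ freeEps 𝒬 i w
  | [] => le_rfl
  | x :: w => le_max_of_le_left (h.eps_nonneg i x)

lemma freePhi_nonneg : ∀ w : List Q, 0 ≤ freePhi 𝒬 i w
  | [] => le_rfl
  | x :: w => le_max_of_le_right (freePhi_nonneg w)

lemma qfreeEps_nonneg : ∀ w : List Q, 0 ≤ qfreeEps 𝒬 i w
  | [] => le_rfl
  | x :: w => by
    rw [qfreeEps]
    split_ifs with hc
    · exact le_top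
    · exact le_max_of_le_left (h.eps_nonneg i x)

lemma freePhi_eq_freeEps : ∀ w : List Q,
    freePhi 𝒬 i w = freeEps 𝒬 i w + ((S.pair (freeWt 𝒬 w) i : ℤ) : WithTop ℤ)
  | [] => by simp [freePhi, freeEps, freeWt, S.pair_zero]
  | x :: w => by
    rw [freePhi, freeEps, freePhi_eq_freeEps w, h.phi_eq i x]
    have hwt : S.pair (freeWt 𝒬 (x :: w)) i = S.pair (𝒬.wt x) i + S.pair (freeWt 𝒬 w) i := by
      rw [freeWt, S.pair_add]
    rw [hwt]
    set a := 𝒬.ε i x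
    set b := freeEps 𝒬 i w
    set px := S.pair (𝒬.wt x) i
    set pw := S.pair (freeWt 𝒬 w) i
    calc max (a + (px : WithTop ℤ) + (pw : WithTop ℤ)) (b + (pw : WithTop ℤ))
        = max (a + (px : WithTop ℤ)) b + (pw : WithTop ℤ) := by
          rcases le_total (a + (px : WithTop ℤ)) b with hab | hab
          · rw [max_eq_right hab, max_eq_right (add_le_add_left hab _)]
          · rw [max_eq_left hab, max_eq_left (add_le_add_left hab _)]
      _ = (max a (b + ((-px : ℤ) : WithTop ℤ)) + (px : WithTop ℤ)) + (pw : WithTop ℤ) := by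
          rw [wtop_max_add]
      _ = max a (b + ((-px : ℤ) : WithTop ℤ)) + ((px + pw : ℤ) : WithTop ℤ) := by
          rw [add_assoc, wtop_coe_add']

lemma freeEps_le_qfreeEps : ∀ w : List Q, freeEps 𝒬 i w ≤ qfreeEps 𝒬 i w
  | [] => le_rfl
  | x :: w => by
    rw [freeEps, qfreeEps]
    split_ifs with hc
    · exact le_top
    · exact max_le_max le_rfl (add_le_add_left (freeEps_le_qfreeEps w) _)

lemma qfreeEps_eq_of_ne_top : ∀ w : List Q, qfreeEps 𝒬 i w ≠ ⊤ →
    qfreeEps 𝒬 i w = freeEps 𝒬 i w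
  | [] => fun _ => rfl
  | x :: w => by
    intro hne
    rw [qfreeEps] at hne ⊢
    split_ifs at hne ⊢ with hc
    · exact absurd rfl hne
    · have hw : qfreeEps 𝒬 i w ≠ ⊤ := by
        intro htop
        exact hne (by rw [htop]; simp [max_eq_top])
      rw [freeEps, qfreeEps_eq_of_ne_top w hw]

lemma qfreePhi_eq_top : ∀ w : List Q, qfreeEps 𝒬 i w = ⊤ → qfreePhi 𝒬 i w = ⊤
  | [] => by intro h0; exact absurd h0 (by simp [qfreeEps])
  | x :: w => by
    intro htop
    rw [qfreeEps] at htop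
    rw [qfreePhi]
    split_ifs at htop ⊢ with hc
    · rfl
    · rcases max_eq_top.mp htop with hx | hw
      · rw [h.phi_top i x hx]
        simp [max_eq_top]
      · rw [qfreePhi_eq_top w ((wtop_add_coe_eq_top _ _).mp hw)]
        simp [max_eq_top]

lemma qfreePhi_eq_of_ne_top : ∀ w : List Q, qfreeEps 𝒬 i w ≠ ⊤ →
    qfreePhi 𝒬 i w = freePhi 𝒬 i w
  | [] => fun _ => rfl
  | x :: w => by
    intro hne
    rw [qfreeEps] at hne
    rw [qfreePhi, freePhi]
    split_ifs at hne ⊢ with hc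
    · exact absurd rfl hne
    · have hw : qfreeEps 𝒬 i w ≠ ⊤ := by
        intro htop
        exact hne (by rw [htop]; simp [max_eq_top])
      rw [qfreePhi_eq_of_ne_top w hw]

lemma eps_ne_top_of_freeEps {w : List Q} (hne : freeEps 𝒬 i w ≠ ⊤) :
    ∀ x ∈ w, 𝒬.ε i x ≠ ⊤ := by
  induction w with
  | nil => intro x hx; exact absurd hx (List.not_mem_nil (a := x))
  | cons y w ih =>
    rw [freeEps] at hne
    intro x hx
    rcases List.mem_cons.mp hx with rfl | hxw
    · intro htop; exact hne (by rw [htop]; simp [max_eq_top])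
    · refine ih ?_ x hxw
      intro htop
      exact hne (by rw [htop]; simp [max_eq_top, wtop_add_coe_eq_top])

omit h in
lemma freeEps_cons_ne_top {x : Q} {w : List Q} (hne : freeEps 𝒬 i (x :: w) ≠ ⊤) :
    𝒬.ε i x ≠ ⊤ ∧ freeEps 𝒬 i w ≠ ⊤ := by
  rw [freeEps] at hne
  constructor
  · intro htop; exact hne (by rw [htop]; simp [max_eq_top])
  · intro htop; exact hne (by rw [htop]; simp [max_eq_top])

lemma freeF_isSome_iff : ∀ w : List Q,
    (freeF 𝒬 i w).isSome ↔ (freeEps 𝒬 i w ≠ ⊤ ∧ 0 < freePhi 𝒬 i w) := by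
  intro w
  induction w with
  | nil => simp [freeF, freeEps, freePhi]
  | cons x w ih =>
    rw [freeF]
    split_ifs with hlt
    · -- the operator acts on the first letter
      have hEw : freeEps 𝒬 i w ≠ ⊤ := ne_top_of_lt hlt
      have hphipos : 0 < 𝒬.φ i x := lt_of_le_of_lt (h.freeEps_nonneg i w) hlt
      rw [opt_isSome_map]
      rw [h.f_isSome_iff i x]
      constructor
      · rintro ⟨hex, -⟩
        have hφx : 𝒬.φ i x ≠ ⊤ := h.phi_ne_top i x hex
        constructor
        · rw [freeEps]
          intro htop
          rcases max_eq_top.mp htop with h1 | h1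
          · exact hex h1
          · exact hEw ((wtop_add_coe_eq_top _ _).mp h1)
        · rw [freePhi]
          refine lt_max_of_lt_left ?_
          calc (0 : WithTop ℤ) ≤ freePhi 𝒬 i w := h.freePhi_nonneg i w
            _ = freeEps 𝒬 i w + ((S.pair (freeWt 𝒬 w) i : ℤ) : WithTop ℤ) :=
                h.freePhi_eq_freeEps i w
            _ < 𝒬.φ i x + ((S.pair (freeWt 𝒬 w) i : ℤ) : WithTop ℤ) :=
                WithTop.add_lt_add_right WithTop.coe_ne_top hlt
      · rintro ⟨hne, -⟩
        exact ⟨(freeEps_cons_ne_top i hne).1, hphipos⟩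
    · -- the operator acts on the tail
      push_neg at hlt
      rw [opt_isSome_map, ih]
      constructor
      · rintro ⟨hEw, hPw⟩
        have hφx : 𝒬.φ i x ≠ ⊤ := by
          intro htop
          rw [htop] at hlt
          exact hEw (top_le_iff.mp hlt)
        have hex : 𝒬.ε i x ≠ ⊤ := by
          intro htop
          exact hφx (h.phi_top i x htop)
        constructor
        · rw [freeEps]
          intro htop
          rcases max_eq_top.mp htop with h1 | h1
          · exact hex h1
          · exact hEw ((wtop_add_coe_eq_top _ _).mp h1)
        · rw [freePhi]
          exact lt_max_of_lt_right hPw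
      · rintro ⟨hne, hP⟩
        obtain ⟨hex, hEw⟩ := freeEps_cons_ne_top i hne
        refine ⟨hEw, ?_⟩
        rw [freePhi] at hP
        rcases lt_max_iff.mp hP with h1 | h1
        · -- 0 < φ x + pw ; but φ x ≤ freeEps w implies φx + pw ≤ freePhi w
          have hle : 𝒬.φ i x + ((S.pair (freeWt 𝒬 w) i : ℤ) : WithTop ℤ) ≤ freePhi 𝒬 i w := by
            rw [h.freePhi_eq_freeEps i w]
            exact add_le_add_left hlt _
          exact lt_of_lt_of_le h1 hle
        · exact h1

lemma freeE_isSome_iff : ∀ w : List Q,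
    (freeE 𝒬 i w).isSome ↔ (freeEps 𝒬 i w ≠ ⊤ ∧ 0 < freeEps 𝒬 i w) := by
  intro w
  induction w with
  | nil => simp [freeE, freeEps]
  | cons x w ih =>
    rw [freeE]
    split_ifs with hle
    · -- acts on first letter
      rw [opt_isSome_map, h.e_isSome_iff i x]
      constructor
      · rintro ⟨hex, hepos⟩
        have hφx : 𝒬.φ i x ≠ ⊤ := h.phi_ne_top i x hex
        have hEw : freeEps 𝒬 i w ≠ ⊤ := by
          intro htop
          rw [htop] at hle
          exact hφx (top_le_iff.mp hle)
        refine ⟨?_, ?_⟩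
        · rw [freeEps]
          intro htop
          rcases max_eq_top.mp htop with h1 | h1
          · exact hex h1
          · exact hEw ((wtop_add_coe_eq_top _ _).mp h1)
        · rw [freeEps]
          exact lt_max_of_lt_left hepos
      · rintro ⟨hne, hpos⟩
        obtain ⟨hex, hEw⟩ := freeEps_cons_ne_top i hne
        refine ⟨hex, ?_⟩
        rw [freeEps] at hpos
        rcases lt_max_iff.mp hpos with h1 | h1
        · exact h1
        · -- 0 < freeEps w - px; freeEps w ≤ φ x gives freeEps w - px ≤ ε x
          have hle2 : freeEps 𝒬 i w + ((-(S.pair (𝒬.wt x) i) : ℤ) : WithTop ℤ) ≤ 𝒬.ε i x := by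
            have := add_le_add_left hle (((-(S.pair (𝒬.wt x) i) : ℤ) : WithTop ℤ))
            refine le_trans this (le_of_eq ?_)
            rw [h.phi_eq i x, add_assoc, wtop_coe_add']
            simp
          exact lt_of_lt_of_le h1 hle2
    · -- acts on tail
      push_neg at hle
      rw [opt_isSome_map, ih]
      constructor
      · rintro ⟨hEw, hpos⟩
        have hex : 𝒬.ε i x ≠ ⊤ := by
          intro htop
          have : 𝒬.φ i x = ⊤ := h.phi_top i x htop
          rw [this] at hle
          exact (not_top_lt hle).elim
        refine ⟨?_, ?_⟩
        · rw [freeEps]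
          intro htop
          rcases max_eq_top.mp htop with h1 | h1
          · exact hex h1
          · exact hEw ((wtop_add_coe_eq_top _ _).mp h1)
        · rw [freeEps]
          refine lt_max_of_lt_right ?_
          -- 0 < freeEps w - px because φ x < freeEps w and 0 ≤ ε x, φ x = ε x + px
          have h1 : 𝒬.φ i x + ((-(S.pair (𝒬.wt x) i) : ℤ) : WithTop ℤ) <
              freeEps 𝒬 i w + ((-(S.pair (𝒬.wt x) i) : ℤ) : WithTop ℤ) :=
            WithTop.add_lt_add_right WithTop.coe_ne_top hle
          have h2 : 𝒬.φ i x + ((-(S.pair (𝒬.wt x) i) : ℤ) : WithTop ℤ) = 𝒬.ε i x := by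
            rw [h.phi_eq i x, add_assoc, wtop_coe_add']
            simp
          rw [h2] at h1
          exact lt_of_le_of_lt (h.eps_nonneg i x) h1
      · rintro ⟨hne, hpos⟩
        obtain ⟨hex, hEw⟩ := freeEps_cons_ne_top i hne
        refine ⟨hEw, ?_⟩
        by_contra hw0
        push_neg at hw0
        have hw0' : freeEps 𝒬 i w = 0 := le_antisymm hw0 (h.freeEps_nonneg i w)
        rw [hw0'] at hle
        exact absurd (lt_of_lt_of_le hle (h.phi_nonneg i x)) (lt_irrefl _)

end QC.IsSeminormal

end FreeLemmas
section QFreeLemmas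

variable {S : QCSetting V ι} {Q : Type*} {𝒬 : QC S Q}

namespace QC.IsSeminormal

variable (h : 𝒬.IsSeminormal) (i : ι)
include h

lemma qfreeEps_ne_top_of_qfreeF : ∀ w : List Q,
    (qfreeF 𝒬 i w).isSome → qfreeEps 𝒬 i w ≠ ⊤ := by
  intro w
  induction w with
  | nil => intro hs; simp [qfreeF] at hs
  | cons x w ih =>
    intro hs
    rw [qfreeF] at hs
    rw [qfreeEps]
    by_cases hc : 0 < 𝒬.φ i x ∧ 0 < qfreeEps 𝒬 i w
    · rw [if_pos hc] at hs; simp at hs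
    rw [if_neg hc] at hs
    rw [if_neg hc]
    have hex : 𝒬.ε i x ≠ ⊤ := by
      intro htop
      have hφtop : 𝒬.φ i x = ⊤ := h.phi_top i x htop
      have hq0 : qfreeEps 𝒬 i w = 0 := by
        by_contra hq
        exact hc ⟨by rw [hφtop]; exact WithTop.top_pos,
          lt_of_le_of_ne (h.qfreeEps_nonneg i w) (Ne.symm hq)⟩
      rw [if_pos (by rw [hq0, hφtop]; exact WithTop.top_pos : qfreeEps 𝒬 i w < 𝒬.φ i x)] at hs
      rw [opt_isSome_map, h.f_isSome_iff i x] at hs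
      exact hs.1 htop
    by_cases hlt : qfreeEps 𝒬 i w < 𝒬.φ i x
    · rw [if_pos hlt] at hs
      have hqw : qfreeEps 𝒬 i w ≠ ⊤ := ne_top_of_lt hlt
      intro htop
      rcases max_eq_top.mp htop with h1 | h1
      · exact hex h1
      · exact hqw ((wtop_add_coe_eq_top _ _).mp h1)
    · rw [if_neg hlt] at hs
      have hqw : qfreeEps 𝒬 i w ≠ ⊤ := ih (by rwa [opt_isSome_map] at hs)
      intro htop
      rcases max_eq_top.mp htop with h1 | h1
      · exact hex h1
      · exact hqw ((wtop_add_coe_eq_top _ _).mp h1)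

lemma qfreeEps_ne_top_of_qfreeE : ∀ w : List Q,
    (qfreeE 𝒬 i w).isSome → qfreeEps 𝒬 i w ≠ ⊤ := by
  intro w
  induction w with
  | nil => intro hs; simp [qfreeE] at hs
  | cons x w ih =>
    intro hs
    rw [qfreeE] at hs
    rw [qfreeEps]
    by_cases hc : 0 < 𝒬.φ i x ∧ 0 < qfreeEps 𝒬 i w
    · rw [if_pos hc] at hs; simp at hs
    rw [if_neg hc] at hs
    rw [if_neg hc]
    have hex : 𝒬.ε i x ≠ ⊤ := by
      intro htop
      have hφtop : 𝒬.φ i x = ⊤ := h.phi_top i x htop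
      have hq0 : qfreeEps 𝒬 i w = 0 := by
        by_contra hq
        exact hc ⟨by rw [hφtop]; exact WithTop.top_pos,
          lt_of_le_of_ne (h.qfreeEps_nonneg i w) (Ne.symm hq)⟩
      rw [if_pos (by rw [hφtop]; exact le_top : qfreeEps 𝒬 i w ≤ 𝒬.φ i x)] at hs
      rw [opt_isSome_map, h.e_isSome_iff i x] at hs
      exact hs.1 htop
    by_cases hle : qfreeEps 𝒬 i w ≤ 𝒬.φ i x
    · rw [if_pos hle] at hs
      rw [opt_isSome_map, h.e_isSome_iff i x] at hs
      have hφx : 𝒬.φ i x ≠ ⊤ := h.phi_ne_top i x hs.1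
      have hqw : qfreeEps 𝒬 i w ≠ ⊤ := by
        intro htop
        rw [htop] at hle
        exact hφx (top_le_iff.mp hle)
      intro htop
      rcases max_eq_top.mp htop with h1 | h1
      · exact hex h1
      · exact hqw ((wtop_add_coe_eq_top _ _).mp h1)
    · rw [if_neg hle] at hs
      have hqw : qfreeEps 𝒬 i w ≠ ⊤ := ih (by rwa [opt_isSome_map] at hs)
      intro htop
      rcases max_eq_top.mp htop with h1 | h1
      · exact hex h1
      · exact hqw ((wtop_add_coe_eq_top _ _).mp h1)

lemma qfree_eq_free_of_ne_top : ∀ w : List Q, qfreeEps 𝒬 i w ≠ ⊤ →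
    qfreeF 𝒬 i w = freeF 𝒬 i w ∧ qfreeE 𝒬 i w = freeE 𝒬 i w := by
  intro w
  induction w with
  | nil => intro _; exact ⟨rfl, rfl⟩
  | cons x w ih =>
    intro hne
    have hc : ¬(0 < 𝒬.φ i x ∧ 0 < qfreeEps 𝒬 i w) := by
      intro hcc
      rw [qfreeEps, if_pos hcc] at hne
      exact hne rfl
    have hqw : qfreeEps 𝒬 i w ≠ ⊤ := by
      intro htop
      rw [qfreeEps, if_neg hc, htop] at hne
      exact hne (by simp [max_eq_top, wtop_add_coe_eq_top])
    have heq : qfreeEps 𝒬 i w = freeEps 𝒬 i w := h.qfreeEps_eq_of_ne_top i w hqw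
    obtain ⟨ihF, ihE⟩ := ih hqw
    constructor
    · rw [qfreeF, freeF, if_neg hc, heq, ihF]
    · rw [qfreeE, freeE, if_neg hc, heq, ihE]

end QC.IsSeminormal

end QFreeLemmas
section Counting

variable {S : QCSetting V ι} {Q : Type*}

/-- The number of letters of `w` whose weight pairs to `-1` with `α_i^∨`. -/
def mcount (𝒬 : QC S Q) (i : ι) (w : List Q) : ℕ :=
  (w.map fun x => if S.pair (𝒬.wt x) i = -1 then 1 else 0).sum

lemma mcount_nil (𝒬 : QC S Q) (i : ι) : mcount 𝒬 i [] = 0 := rfl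

lemma mcount_cons (𝒬 : QC S Q) (i : ι) (x : Q) (w : List Q) :
    mcount 𝒬 i (x :: w) = (if S.pair (𝒬.wt x) i = -1 then 1 else 0) + mcount 𝒬 i w := by
  simp [mcount]

variable {𝒬 : QC S Q}

lemma mcount_eq_of_freeWt_eq
    (hli : LinearIndependent ℝ ((↑) : (Set.range fun x : Q => ((𝒬.wt x : V))) → V))
    {w w' : List Q} (hwt : freeWt 𝒬 w = freeWt 𝒬 w') (i : ι) :
    mcount 𝒬 i w = mcount 𝒬 i w' := by
  classical
  set s : Set V := Set.range fun x : Q => ((𝒬.wt x : V)) with hs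
  set r : V → ℝ := fun v =>
    if 2 * (inner ℝ v (S.simple i) : ℝ) / (inner ℝ (S.simple i) (S.simple i) : ℝ) = -1
    then 1 else 0 with hr
  set F : List Q → (V →₀ ℝ) := fun u =>
    (u.map fun x => Finsupp.single ((𝒬.wt x : V)) (1 : ℝ)).sum with hF
  have hF_nil : F [] = 0 := rfl
  have hF_cons : ∀ x u, F (x :: u) = Finsupp.single ((𝒬.wt x : V)) (1 : ℝ) + F u := by
    intro x u; simp [hF]
  have hc1 : ∀ u : List Q,
      Finsupp.linearCombination ℝ (id : V → V) (F u) = ((freeWt 𝒬 u : V)) := by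
    intro u
    induction u with
    | nil => simp [hF_nil, freeWt]
    | cons x u ih =>
      rw [hF_cons, map_add, ih, Finsupp.linearCombination_single, one_smul]
      rfl
  have hc2 : ∀ u : List Q, F u ∈ Finsupp.supported ℝ ℝ s := by
    intro u
    induction u with
    | nil => simp [hF_nil]
    | cons x u ih =>
      rw [hF_cons]
      refine Submodule.add_mem _ ?_ ih
      refine Finsupp.single_mem_supported ℝ _ ?_
      exact ⟨x, rfl⟩
  have hc3 : ∀ u : List Q,
      Finsupp.linearCombination ℝ r (F u) = (mcount 𝒬 i u : ℝ) := by
    intro u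
    induction u with
    | nil => simp [hF_nil, mcount_nil]
    | cons x u ih =>
      rw [hF_cons, map_add, ih, Finsupp.linearCombination_single, one_smul, mcount_cons]
      have : r ((𝒬.wt x : V)) =
          ((if S.pair (𝒬.wt x) i = -1 then 1 else 0 : ℕ) : ℝ) := by
        simp only [hr]
        have hspec := S.pair_spec (𝒬.wt x) i
        by_cases hp : S.pair (𝒬.wt x) i = -1
        · rw [if_pos hp, if_pos (by rw [← hspec, hp]; norm_num)]
          norm_num
        · rw [if_neg hp, if_neg ?_]
          · norm_num
          · intro hcontra
            apply hp
            have : ((S.pair (𝒬.wt x) i : ℤ) : ℝ) = ((-1 : ℤ) : ℝ) := by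
              rw [hspec, hcontra]; norm_num
            exact_mod_cast this
      rw [this]
      push_cast
      ring
  have hli' : ∀ l ∈ Finsupp.supported ℝ ℝ s,
      Finsupp.linearCombination ℝ (id : V → V) l = 0 → l = 0 :=
    linearIndepOn_iff.mp (linearIndependent_subtype_iff.mp hli)
  have hdiff : F w - F w' = 0 := by
    refine hli' _ (Submodule.sub_mem _ (hc2 w) (hc2 w')) ?_
    rw [map_sub, hc1, hc1, hwt, sub_self]
  have hFeq : F w = F w' := by
    have := sub_eq_zero.mp hdiff
    exact this
  have : (mcount 𝒬 i w : ℝ) = (mcount 𝒬 i w' : ℝ) := by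
    rw [← hc3 w, ← hc3 w', hFeq]
  exact_mod_cast this

end Counting
section Invariant

variable {S : QCSetting V ι} {Q : Type*} {𝒬 : QC S Q}

lemma wtop_coe_lt_coe (a b : ℤ) : ((a : WithTop ℤ)) < (b : WithTop ℤ) ↔ a < b :=
  WithTop.coe_lt_coe

lemma QC.IsSeminormal.collapse_invariant (h : 𝒬.IsSeminormal)
    (hli : LinearIndependent ℝ ((↑) : (Set.range fun x : Q => ((𝒬.wt x : V))) → V))
    (i : ι) : ∀ w : List Q, (∀ x ∈ w, 𝒬.ε i x ≠ ⊤) →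
    ∃ a : ℕ, freeEps 𝒬 i w = ((a : ℤ) : WithTop ℤ) ∧ a ≤ mcount 𝒬 i w ∧
      (qfreeEps 𝒬 i w = ⊤ ↔ a < mcount 𝒬 i w) := by
  intro w
  induction w with
  | nil =>
    intro _
    refine ⟨0, by simp [freeEps], le_rfl, ?_⟩
    simp [qfreeEps, mcount_nil]
  | cons x w ih =>
    intro hall
    have hx : 𝒬.ε i x ≠ ⊤ := hall x List.mem_cons_self
    obtain ⟨a, ha, ham, haiff⟩ := ih (fun y hy => hall y (List.mem_cons_of_mem x hy))
    have hmc := mcount_cons 𝒬 i x w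
    rcases h.letter_cases hli i x hx with ⟨he, hφ, hp⟩ | ⟨he, hφ, hp⟩ | ⟨he, hφ, hp⟩
    · -- neutral letter
      have hm : mcount 𝒬 i (x :: w) = mcount 𝒬 i w := by rw [hmc, hp]; simp
      have hfE : freeEps 𝒬 i (x :: w) = ((a : ℤ) : WithTop ℤ) := by
        rw [freeEps, he, hp, ha]
        rw [show ((-(0:ℤ) : ℤ) : WithTop ℤ) = 0 by norm_num, add_zero]
        exact max_eq_right (by exact_mod_cast Int.ofNat_nonneg a)
      have hqE : qfreeEps 𝒬 i (x :: w) = qfreeEps 𝒬 i w := by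
        rw [qfreeEps, if_neg (by rw [hφ]; rintro ⟨h0, -⟩; exact lt_irrefl _ h0), he, hp]
        rw [show ((-(0:ℤ) : ℤ) : WithTop ℤ) = 0 by norm_num, add_zero]
        exact max_eq_right (h.qfreeEps_nonneg i w)
      refine ⟨a, hfE, by omega, ?_⟩
      rw [hqE, hm]
      exact haiff
    · -- minus letter
      have hm : mcount 𝒬 i (x :: w) = 1 + mcount 𝒬 i w := by rw [hmc, hp]; simp
      have harith : ∀ b : WithTop ℤ, 0 ≤ b →
          max 1 (b + (((-(-1:ℤ)) : ℤ) : WithTop ℤ)) = b + 1 := by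
        intro b hb
        rw [show (((-(-1:ℤ)) : ℤ) : WithTop ℤ) = 1 by norm_num]
        refine max_eq_right ?_
        calc (1 : WithTop ℤ) = 0 + 1 := by rw [zero_add]
          _ ≤ b + 1 := add_le_add_left hb _
      have hfE : freeEps 𝒬 i (x :: w) = (((a + 1 : ℕ) : ℤ) : WithTop ℤ) := by
        rw [freeEps, he, hp, harith _ (h.freeEps_nonneg i w), ha]
        rw [show ((1 : WithTop ℤ)) = ((1:ℤ) : WithTop ℤ) by norm_num, wtop_coe_add']
        push_cast
        ring_nf
      have hqE : qfreeEps 𝒬 i (x :: w) = qfreeEps 𝒬 i w + 1 := by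
        rw [qfreeEps, if_neg (by rw [hφ]; rintro ⟨h0, -⟩; exact lt_irrefl _ h0), he, hp]
        exact harith _ (h.qfreeEps_nonneg i w)
      refine ⟨a + 1, hfE, by omega, ?_⟩
      rw [hqE, hm]
      constructor
      · intro htop
        have : qfreeEps 𝒬 i w = ⊤ := by
          by_contra hne
          rcases WithTop.ne_top_iff_exists.mp hne with ⟨b, hb⟩
          rw [← hb] at htop
          rw [show ((1 : WithTop ℤ)) = ((1:ℤ) : WithTop ℤ) by norm_num, wtop_coe_add'] at htop
          exact WithTop.coe_ne_top htop
        have := haiff.mp this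
        omega
      · intro hlt
        rw [haiff.mpr (by omega), top_add]
    · -- plus letter
      have hm : mcount 𝒬 i (x :: w) = mcount 𝒬 i w := by rw [hmc, hp]; simp
      have hcoll : (0 : WithTop ℤ) < 𝒬.φ i x := by rw [hφ]; norm_num
      rcases eq_or_ne (qfreeEps 𝒬 i w) ⊤ with hq | hq
      · -- the tail already collapses
        have haltm : a < mcount 𝒬 i w := haiff.mp hq
        have hqE : qfreeEps 𝒬 i (x :: w) = ⊤ := by
          rw [qfreeEps, if_pos ⟨hcoll, by rw [hq]; exact WithTop.top_pos⟩]
        refine ⟨a - 1, ?_, by omega, ?_⟩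
        · rw [freeEps, he, hp, ha]
          rcases Nat.eq_zero_or_pos a with ha0 | ha0
          · subst ha0
            rw [show (((0:ℕ) : ℤ) : WithTop ℤ) + ((-(1:ℤ) : ℤ) : WithTop ℤ)
                = ((-1 : ℤ) : WithTop ℤ) by rw [wtop_coe_add']; norm_num]
            rw [max_eq_left (by exact_mod_cast (by norm_num : (-1:ℤ) ≤ (0:ℤ)) :
              ((-1 : ℤ) : WithTop ℤ) ≤ 0)]
            norm_num
          · rw [wtop_coe_add']
            rw [max_eq_right (by
              rw [show ((0 : WithTop ℤ)) = ((0:ℤ) : WithTop ℤ) by norm_num]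
              exact WithTop.coe_le_coe.mpr (by omega))]
            congr 1
            omega
        · rw [hqE]
          simp only [true_iff]
          omega
      · -- tail does not collapse: a = mcount w
        have ham2 : ¬(a < mcount 𝒬 i w) := fun hc => hq (haiff.mpr hc)
        have haeq : a = mcount 𝒬 i w := by omega
        have hqval : qfreeEps 𝒬 i w = ((a : ℤ) : WithTop ℤ) := by
          rw [h.qfreeEps_eq_of_ne_top i w hq, ha]
        rcases Nat.eq_zero_or_pos a with ha0 | ha0
        · -- a = 0 : no collapse is created
          subst ha0
          have hqE : qfreeEps 𝒬 i (x :: w) = ((0 : ℤ) : WithTop ℤ) := by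
            rw [qfreeEps, if_neg (by rintro ⟨-, h0⟩; rw [hqval] at h0; exact
              (by norm_num : ¬((0:ℤ) : WithTop ℤ) < ((0:ℕ):ℤ)) (by exact_mod_cast h0)),
              he, hp, hqval]
            rw [wtop_coe_add']
            rw [max_eq_left (by
              rw [show ((0 : WithTop ℤ)) = ((0:ℤ) : WithTop ℤ) by norm_num]
              exact WithTop.coe_le_coe.mpr (by omega))]
            norm_num
          refine ⟨0, ?_, by omega, ?_⟩
          · rw [freeEps, he, hp, ha, wtop_coe_add']
            rw [max_eq_left (by
              rw [show ((0 : WithTop ℤ)) = ((0:ℤ) : WithTop ℤ) by norm_num]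
              exact WithTop.coe_le_coe.mpr (by omega))]
            norm_num
          · rw [hqE, hm]
            constructor
            · intro hcontra
              exact absurd hcontra (by exact WithTop.coe_ne_top)
            · omega
        · -- a > 0 : a collapse is created
          have hqE : qfreeEps 𝒬 i (x :: w) = ⊤ := by
            rw [qfreeEps, if_pos ⟨hcoll, by rw [hqval]; exact_mod_cast
              (by omega : (0:ℤ) < (a:ℤ))⟩]
          refine ⟨a - 1, ?_, by omega, ?_⟩
          · rw [freeEps, he, hp, ha, wtop_coe_add']
            rw [max_eq_right (by
              rw [show ((0 : WithTop ℤ)) = ((0:ℤ) : WithTop ℤ) by norm_num]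
              exact WithTop.coe_le_coe.mpr (by omega))]
            congr 1
            omega
          · rw [hqE, hm]
            simp only [true_iff]
            omega

end Invariant
section Plumbing

variable {S : QCSetting V ι} {Q : Type*} {𝒬 : QC S Q}

lemma T_wt (w : FreeMonoid Q) : (freeTensorQC 𝒬).wt w = freeWt 𝒬 (FreeMonoid.toList w) := rfl
lemma T_eps (i : ι) (w : FreeMonoid Q) :
    (freeTensorQC 𝒬).ε i w = freeEps 𝒬 i (FreeMonoid.toList w) := rfl
lemma T_phi (i : ι) (w : FreeMonoid Q) :
    (freeTensorQC 𝒬).φ i w = freePhi 𝒬 i (FreeMonoid.toList w) := rfl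

lemma toList_eq (w : FreeMonoid Q) : FreeMonoid.toList w = w := rfl

lemma T_f (i : ι) (w : FreeMonoid Q) :
    (freeTensorQC 𝒬).f i w = freeF 𝒬 i w := by
  show (freeF 𝒬 i w).map _ = _
  cases freeF 𝒬 i w <;> rfl

lemma T_e (i : ι) (w : FreeMonoid Q) :
    (freeTensorQC 𝒬).e i w = freeE 𝒬 i w := by
  show (freeE 𝒬 i w).map _ = _
  cases freeE 𝒬 i w <;> rfl

lemma Tq_wt (w : FreeMonoid Q) : (freeQTensorQC 𝒬).wt w = freeWt 𝒬 w := rfl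
lemma Tq_eps (i : ι) (w : FreeMonoid Q) : (freeQTensorQC 𝒬).ε i w = qfreeEps 𝒬 i w := rfl
lemma Tq_phi (i : ι) (w : FreeMonoid Q) : (freeQTensorQC 𝒬).φ i w = qfreePhi 𝒬 i w := rfl

lemma Tq_f (i : ι) (w : FreeMonoid Q) :
    (freeQTensorQC 𝒬).f i w = qfreeF 𝒬 i w := by
  show (qfreeF 𝒬 i w).map _ = _
  cases qfreeF 𝒬 i w <;> rfl

lemma Tq_e (i : ι) (w : FreeMonoid Q) :
    (freeQTensorQC 𝒬).e i w = qfreeE 𝒬 i w := by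
  show (qfreeE 𝒬 i w).map _ = _
  cases qfreeE 𝒬 i w <;> rfl

lemma pmap_eq_some_iff' {A B : Type*} {p : A → Prop} {f : ∀ a, p a → B} {o : Option A}
    {H : ∀ a, o = some a → p a} {b : B} :
    o.pmap f H = some b ↔ ∃ a h, o = some a ∧ f a h = b := by
  cases o with
  | none => simp [Option.pmap]
  | some a =>
    simp only [Option.pmap, Option.some_inj]
    constructor
    · intro hb
      exact ⟨a, H a rfl, rfl, hb⟩
    · rintro ⟨a', h', ha', hb⟩
      cases ha'
      exact hb

lemma compQC_f_iff {M : Type*} (P : QC S M) (u0 : M) (i : ι)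
    (y z : {w : M // P.conn u0 w}) :
    (P.compQC u0).f i y = some z ↔ P.f i y.val = some z.val := by
  show Option.pmap _ (P.f i y.val) _ = some z ↔ _
  refine Iff.trans pmap_eq_some_iff' ?_
  constructor
  · rintro ⟨a, hpa, ha, rfl⟩
    exact ha
  · intro hz
    exact ⟨z.val, z.2, hz, rfl⟩

lemma compQC_e_iff {M : Type*} (P : QC S M) (u0 : M) (i : ι)
    (y z : {w : M // P.conn u0 w}) :
    (P.compQC u0).e i y = some z ↔ P.e i y.val = some z.val := by
  show Option.pmap _ (P.e i y.val) _ = some z ↔ _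
  refine Iff.trans pmap_eq_some_iff' ?_
  constructor
  · rintro ⟨a, hpa, ha, rfl⟩
    exact ha
  · intro hz
    exact ⟨z.val, z.2, hz, rfl⟩

/-- q-edges are also tensor edges. -/
lemma QC.IsSeminormal.qedge_f (h : 𝒬.IsSeminormal) (i : ι) {a b : FreeMonoid Q}
    (hab : (freeQTensorQC 𝒬).f i a = some b) : (freeTensorQC 𝒬).f i a = some b := by
  rw [Tq_f] at hab
  have hne := h.qfreeEps_ne_top_of_qfreeF i a (by rw [hab]; rfl)
  rw [T_f, ← (h.qfree_eq_free_of_ne_top i a hne).1]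
  exact hab

lemma QC.IsSeminormal.qedge_e (h : 𝒬.IsSeminormal) (i : ι) {a b : FreeMonoid Q}
    (hab : (freeQTensorQC 𝒬).e i a = some b) : (freeTensorQC 𝒬).e i a = some b := by
  rw [Tq_e] at hab
  have hne := h.qfreeEps_ne_top_of_qfreeE i a (by rw [hab]; rfl)
  rw [T_e, ← (h.qfree_eq_free_of_ne_top i a hne).2]
  exact hab

lemma QC.IsSeminormal.conn_q_to_t (h : 𝒬.IsSeminormal) {a b : FreeMonoid Q}
    (hab : (freeQTensorQC 𝒬).conn a b) : (freeTensorQC 𝒬).conn a b := by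
  refine Relation.EqvGen.mono ?_ _ _ hab
  rintro x y ⟨i, hxy | hxy | hxy | hxy⟩
  · exact ⟨i, Or.inl (h.qedge_f i hxy)⟩
  · exact ⟨i, Or.inr (Or.inl (h.qedge_f i hxy))⟩
  · exact ⟨i, Or.inr (Or.inr (Or.inl (h.qedge_e i hxy)))⟩
  · exact ⟨i, Or.inr (Or.inr (Or.inr (h.qedge_e i hxy)))⟩

end Plumbing
section Transfer

variable {S : QCSetting V ι} {Q : Type*} {𝒬 : QC S Q} {u v : FreeMonoid Q}

lemma psi_total (ψ : QCHom ((freeTensorQC 𝒬).compQC u) ((freeTensorQC 𝒬).compQC v))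
    (hinj : Function.Injective ψ.toFun) (x : {w // (freeTensorQC 𝒬).conn u w}) :
    ∃ y, ψ.toFun (some x) = some y := by
  cases hy : ψ.toFun (some x) with
  | none =>
    exfalso
    have : ψ.toFun (some x) = ψ.toFun none := by rw [hy, ψ.map_none]
    exact Option.some_ne_none x (hinj this)
  | some y => exact ⟨y, rfl⟩

variable (h : 𝒬.IsSeminormal)
  (hli : LinearIndependent ℝ ((↑) : (Set.range fun x : Q => ((𝒬.wt x : V))) → V))
  (ψ : QCHom ((freeTensorQC 𝒬).compQC u) ((freeTensorQC 𝒬).compQC v))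

include h hli

lemma qtransfer (x : {w // (freeTensorQC 𝒬).conn u w}) (y : {w // (freeTensorQC 𝒬).conn v w})
    (hxy : ψ.toFun (some x) = some y) (i : ι) :
    qfreeEps 𝒬 i x.val = qfreeEps 𝒬 i y.val ∧ qfreePhi 𝒬 i x.val = qfreePhi 𝒬 i y.val := by
  have hwt : freeWt 𝒬 y.val = freeWt 𝒬 x.val := ψ.wt_eq x y hxy
  have hE : freeEps 𝒬 i y.val = freeEps 𝒬 i x.val := ψ.eps_eq i x y hxy
  have hP : freePhi 𝒬 i y.val = freePhi 𝒬 i x.val := ψ.phi_eq i x y hxy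
  by_cases htop : freeEps 𝒬 i x.val = ⊤
  · have hqx : qfreeEps 𝒬 i x.val = ⊤ :=
      top_le_iff.mp (htop ▸ h.freeEps_le_qfreeEps i x.val)
    have hqy : qfreeEps 𝒬 i y.val = ⊤ :=
      top_le_iff.mp ((hE.trans htop) ▸ h.freeEps_le_qfreeEps i y.val)
    exact ⟨hqx.trans hqy.symm,
      (h.qfreePhi_eq_top i x.val hqx).trans (h.qfreePhi_eq_top i y.val hqy).symm⟩
  · have htopy : freeEps 𝒬 i y.val ≠ ⊤ := by rw [hE]; exact htop
    obtain ⟨a, hax, hamx, hiffx⟩ :=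
      h.collapse_invariant hli i x.val (h.eps_ne_top_of_freeEps i htop)
    obtain ⟨b, hby, hbmy, hiffy⟩ :=
      h.collapse_invariant hli i y.val (h.eps_ne_top_of_freeEps i htopy)
    have hab : a = b := by
      have : ((a : ℤ) : WithTop ℤ) = ((b : ℤ) : WithTop ℤ) := by
        rw [← hax, ← hby, hE]
      exact_mod_cast this
    have hmxy : mcount 𝒬 i x.val = mcount 𝒬 i y.val :=
      mcount_eq_of_freeWt_eq hli hwt.symm i
    by_cases hcol : qfreeEps 𝒬 i x.val = ⊤
    · have hcoly : qfreeEps 𝒬 i y.val = ⊤ := by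
        rw [hiffy]
        rw [← hab, ← hmxy]
        exact hiffx.mp hcol
      exact ⟨hcol.trans hcoly.symm,
        (h.qfreePhi_eq_top i x.val hcol).trans (h.qfreePhi_eq_top i y.val hcoly).symm⟩
    · have hcoly : qfreeEps 𝒬 i y.val ≠ ⊤ := by
        intro hcc
        exact hcol (hiffx.mpr (by rw [hab, hmxy]; exact hiffy.mp hcc))
      refine ⟨?_, ?_⟩
      · rw [h.qfreeEps_eq_of_ne_top i x.val hcol, h.qfreeEps_eq_of_ne_top i y.val hcoly, hE]
      · rw [h.qfreePhi_eq_of_ne_top i x.val hcol, h.qfreePhi_eq_of_ne_top i y.val hcoly, hP]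

lemma edge_f_forward (hinj : Function.Injective ψ.toFun)
    (x : {w // (freeTensorQC 𝒬).conn u w}) (y : {w // (freeTensorQC 𝒬).conn v w})
    (hxy : ψ.toFun (some x) = some y) (i : ι) {t : FreeMonoid Q}
    (ht : qfreeF 𝒬 i x.val = some t) :
    ∃ (htc : (freeTensorQC 𝒬).conn u t) (s : {w // (freeTensorQC 𝒬).conn v w}),
      ψ.toFun (some ⟨t, htc⟩) = some s ∧ qfreeF 𝒬 i y.val = some s.val := by
  have hne : qfreeEps 𝒬 i x.val ≠ ⊤ :=
    h.qfreeEps_ne_top_of_qfreeF i x.val (by rw [ht]; rfl)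
  have hfree : freeF 𝒬 i x.val = some t := by
    rw [← (h.qfree_eq_free_of_ne_top i x.val hne).1]; exact ht
  have hTf : (freeTensorQC 𝒬).f i x.val = some t := by rw [T_f]; exact hfree
  have htc : (freeTensorQC 𝒬).conn u t :=
    Relation.EqvGen.trans _ _ _ x.2 (Relation.EqvGen.rel _ _ ⟨i, Or.inl hTf⟩)
  obtain ⟨s, hs⟩ := psi_total ψ hinj ⟨t, htc⟩
  have hcf : ((freeTensorQC 𝒬).compQC u).f i x = some ⟨t, htc⟩ :=
    (compQC_f_iff _ _ _ _ _).mpr hTf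
  have hcfv := ψ.comm_f i x ⟨t, htc⟩ y s hcf hxy hs
  have hfy : freeF 𝒬 i y.val = some s.val := by
    rw [← T_f]; exact (compQC_f_iff _ _ _ _ _).mp hcfv
  have hney : qfreeEps 𝒬 i y.val ≠ ⊤ := by
    rw [← (qtransfer h hli ψ x y hxy i).1]; exact hne
  exact ⟨htc, s, hs, by rw [(h.qfree_eq_free_of_ne_top i y.val hney).1]; exact hfy⟩

lemma edge_e_forward (hinj : Function.Injective ψ.toFun)
    (x : {w // (freeTensorQC 𝒬).conn u w}) (y : {w // (freeTensorQC 𝒬).conn v w})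
    (hxy : ψ.toFun (some x) = some y) (i : ι) {t : FreeMonoid Q}
    (ht : qfreeE 𝒬 i x.val = some t) :
    ∃ (htc : (freeTensorQC 𝒬).conn u t) (s : {w // (freeTensorQC 𝒬).conn v w}),
      ψ.toFun (some ⟨t, htc⟩) = some s ∧ qfreeE 𝒬 i y.val = some s.val := by
  have hne : qfreeEps 𝒬 i x.val ≠ ⊤ :=
    h.qfreeEps_ne_top_of_qfreeE i x.val (by rw [ht]; rfl)
  have hfree : freeE 𝒬 i x.val = some t := by
    rw [← (h.qfree_eq_free_of_ne_top i x.val hne).2]; exact ht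
  have hTf : (freeTensorQC 𝒬).e i x.val = some t := by rw [T_e]; exact hfree
  have htc : (freeTensorQC 𝒬).conn u t :=
    Relation.EqvGen.trans _ _ _ x.2
      (Relation.EqvGen.rel _ _ ⟨i, Or.inr (Or.inr (Or.inl hTf))⟩)
  obtain ⟨s, hs⟩ := psi_total ψ hinj ⟨t, htc⟩
  have hcf : ((freeTensorQC 𝒬).compQC u).e i x = some ⟨t, htc⟩ :=
    (compQC_e_iff _ _ _ _ _).mpr hTf
  have hcfv := ψ.comm_e i x ⟨t, htc⟩ y s hcf hxy hs
  have hfy : freeE 𝒬 i y.val = some s.val := by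
    rw [← T_e]; exact (compQC_e_iff _ _ _ _ _).mp hcfv
  have hney : qfreeEps 𝒬 i y.val ≠ ⊤ := by
    rw [← (qtransfer h hli ψ x y hxy i).1]; exact hne
  exact ⟨htc, s, hs, by rw [(h.qfree_eq_free_of_ne_top i y.val hney).2]; exact hfy⟩

lemma edge_f_backward (hinj : Function.Injective ψ.toFun)
    (x : {w // (freeTensorQC 𝒬).conn u w}) (y : {w // (freeTensorQC 𝒬).conn v w})
    (hxy : ψ.toFun (some x) = some y) (i : ι) {t' : FreeMonoid Q}
    (ht' : qfreeF 𝒬 i y.val = some t') :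
    ∃ (t : FreeMonoid Q) (htc : (freeTensorQC 𝒬).conn u t)
      (s : {w // (freeTensorQC 𝒬).conn v w}),
      qfreeF 𝒬 i x.val = some t ∧ ψ.toFun (some ⟨t, htc⟩) = some s ∧ s.val = t' := by
  have hney : qfreeEps 𝒬 i y.val ≠ ⊤ :=
    h.qfreeEps_ne_top_of_qfreeF i y.val (by rw [ht']; rfl)
  have hfy : freeF 𝒬 i y.val = some t' := by
    rw [← (h.qfree_eq_free_of_ne_top i y.val hney).1]; exact ht'
  obtain ⟨hEy, hPy⟩ := (h.freeF_isSome_iff i y.val).mp (by rw [hfy]; rfl)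
  have hE : freeEps 𝒬 i y.val = freeEps 𝒬 i x.val := ψ.eps_eq i x y hxy
  have hP : freePhi 𝒬 i y.val = freePhi 𝒬 i x.val := ψ.phi_eq i x y hxy
  have hfx : (freeF 𝒬 i x.val).isSome :=
    (h.freeF_isSome_iff i x.val).mpr ⟨by rw [← hE]; exact hEy, by rw [← hP]; exact hPy⟩
  obtain ⟨t, hft⟩ := Option.isSome_iff_exists.mp hfx
  have hnex : qfreeEps 𝒬 i x.val ≠ ⊤ := by
    rw [(qtransfer h hli ψ x y hxy i).1]; exact hney
  have hqx : qfreeF 𝒬 i x.val = some t := by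
    rw [(h.qfree_eq_free_of_ne_top i x.val hnex).1]; exact hft
  have hTf : (freeTensorQC 𝒬).f i x.val = some t := by rw [T_f]; exact hft
  have htc : (freeTensorQC 𝒬).conn u t :=
    Relation.EqvGen.trans _ _ _ x.2 (Relation.EqvGen.rel _ _ ⟨i, Or.inl hTf⟩)
  obtain ⟨s, hs⟩ := psi_total ψ hinj ⟨t, htc⟩
  have hcf : ((freeTensorQC 𝒬).compQC u).f i x = some ⟨t, htc⟩ :=
    (compQC_f_iff _ _ _ _ _).mpr hTf
  have hcfv := ψ.comm_f i x ⟨t, htc⟩ y s hcf hxy hs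
  have hfys : freeF 𝒬 i y.val = some s.val := by
    rw [← T_f]; exact (compQC_f_iff _ _ _ _ _).mp hcfv
  have hst : s.val = t' := by
    have := hfys.symm.trans hfy
    exact Option.some_inj.mp this
  exact ⟨t, htc, s, hqx, hs, hst⟩

lemma edge_e_backward (hinj : Function.Injective ψ.toFun)
    (x : {w // (freeTensorQC 𝒬).conn u w}) (y : {w // (freeTensorQC 𝒬).conn v w})
    (hxy : ψ.toFun (some x) = some y) (i : ι) {t' : FreeMonoid Q}
    (ht' : qfreeE 𝒬 i y.val = some t') :
    ∃ (t : FreeMonoid Q) (htc : (freeTensorQC 𝒬).conn u t)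
      (s : {w // (freeTensorQC 𝒬).conn v w}),
      qfreeE 𝒬 i x.val = some t ∧ ψ.toFun (some ⟨t, htc⟩) = some s ∧ s.val = t' := by
  have hney : qfreeEps 𝒬 i y.val ≠ ⊤ :=
    h.qfreeEps_ne_top_of_qfreeE i y.val (by rw [ht']; rfl)
  have hfy : freeE 𝒬 i y.val = some t' := by
    rw [← (h.qfree_eq_free_of_ne_top i y.val hney).2]; exact ht'
  obtain ⟨hEy, hPy⟩ := (h.freeE_isSome_iff i y.val).mp (by rw [hfy]; rfl)
  have hE : freeEps 𝒬 i y.val = freeEps 𝒬 i x.val := ψ.eps_eq i x y hxy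
  have hfx : (freeE 𝒬 i x.val).isSome :=
    (h.freeE_isSome_iff i x.val).mpr ⟨by rw [← hE]; exact hEy, by rw [← hE]; exact hPy⟩
  obtain ⟨t, hft⟩ := Option.isSome_iff_exists.mp hfx
  have hnex : qfreeEps 𝒬 i x.val ≠ ⊤ := by
    rw [(qtransfer h hli ψ x y hxy i).1]; exact hney
  have hqx : qfreeE 𝒬 i x.val = some t := by
    rw [(h.qfree_eq_free_of_ne_top i x.val hnex).2]; exact hft
  have hTf : (freeTensorQC 𝒬).e i x.val = some t := by rw [T_e]; exact hft
  have htc : (freeTensorQC 𝒬).conn u t :=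
    Relation.EqvGen.trans _ _ _ x.2
      (Relation.EqvGen.rel _ _ ⟨i, Or.inr (Or.inr (Or.inl hTf))⟩)
  obtain ⟨s, hs⟩ := psi_total ψ hinj ⟨t, htc⟩
  have hcf : ((freeTensorQC 𝒬).compQC u).e i x = some ⟨t, htc⟩ :=
    (compQC_e_iff _ _ _ _ _).mpr hTf
  have hcfv := ψ.comm_e i x ⟨t, htc⟩ y s hcf hxy hs
  have hfys : freeE 𝒬 i y.val = some s.val := by
    rw [← T_e]; exact (compQC_e_iff _ _ _ _ _).mp hcfv
  have hst : s.val = t' := by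
    have := hfys.symm.trans hfy
    exact Option.some_inj.mp this
  exact ⟨t, htc, s, hqx, hs, hst⟩

end Transfer
section Conn

variable {S : QCSetting V ι} {Q : Type*} {𝒬 : QC S Q} {u v : FreeMonoid Q}

variable (h : 𝒬.IsSeminormal)
  (hli : LinearIndependent ℝ ((↑) : (Set.range fun x : Q => ((𝒬.wt x : V))) → V))
  (ψ : QCHom ((freeTensorQC 𝒬).compQC u) ((freeTensorQC 𝒬).compQC v))
  (hinj : Function.Injective ψ.toFun)

include h hli hinj

lemma conn_forward {a b : FreeMonoid Q} (hab : (freeQTensorQC 𝒬).conn a b) :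
    ∀ (ha : (freeTensorQC 𝒬).conn u a) (hb : (freeTensorQC 𝒬).conn u b)
      (ya yb : {w // (freeTensorQC 𝒬).conn v w})
      (_ : ψ.toFun (some ⟨a, ha⟩) = some ya) (_ : ψ.toFun (some ⟨b, hb⟩) = some yb),
      (freeQTensorQC 𝒬).conn ya.val yb.val := by
  induction hab with
  | rel a b hr =>
    intro ha hb ya yb hya hyb
    obtain ⟨i, hc⟩ := hr
    rcases hc with hfab | hfba | heab | heba
    · have hq : qfreeF 𝒬 i a = some b := by rw [← Tq_f]; exact hfab
      obtain ⟨htc, s, hψ, hqy⟩ := edge_f_forward h hli ψ hinj ⟨a, ha⟩ ya hya i hq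
      have hψ' : ψ.toFun (some ⟨b, hb⟩) = some s := by
        rw [show (⟨b, hb⟩ : {w // (freeTensorQC 𝒬).conn u w}) = ⟨b, htc⟩ from
          Subtype.ext rfl]
        exact hψ
      have hs : s = yb := Option.some_inj.mp (hψ'.symm.trans hyb)
      refine Relation.EqvGen.rel _ _ ⟨i, Or.inl ?_⟩
      rw [Tq_f, ← hs]
      exact hqy
    · have hq : qfreeF 𝒬 i b = some a := by rw [← Tq_f]; exact hfba
      obtain ⟨htc, s, hψ, hqy⟩ := edge_f_forward h hli ψ hinj ⟨b, hb⟩ yb hyb i hq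
      have hψ' : ψ.toFun (some ⟨a, ha⟩) = some s := by
        rw [show (⟨a, ha⟩ : {w // (freeTensorQC 𝒬).conn u w}) = ⟨a, htc⟩ from
          Subtype.ext rfl]
        exact hψ
      have hs : s = ya := Option.some_inj.mp (hψ'.symm.trans hya)
      refine Relation.EqvGen.rel _ _ ⟨i, Or.inr (Or.inl ?_)⟩
      rw [Tq_f, ← hs]
      exact hqy
    · have hq : qfreeE 𝒬 i a = some b := by rw [← Tq_e]; exact heab
      obtain ⟨htc, s, hψ, hqy⟩ := edge_e_forward h hli ψ hinj ⟨a, ha⟩ ya hya i hq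
      have hψ' : ψ.toFun (some ⟨b, hb⟩) = some s := by
        rw [show (⟨b, hb⟩ : {w // (freeTensorQC 𝒬).conn u w}) = ⟨b, htc⟩ from
          Subtype.ext rfl]
        exact hψ
      have hs : s = yb := Option.some_inj.mp (hψ'.symm.trans hyb)
      refine Relation.EqvGen.rel _ _ ⟨i, Or.inr (Or.inr (Or.inl ?_))⟩
      rw [Tq_e, ← hs]
      exact hqy
    · have hq : qfreeE 𝒬 i b = some a := by rw [← Tq_e]; exact heba
      obtain ⟨htc, s, hψ, hqy⟩ := edge_e_forward h hli ψ hinj ⟨b, hb⟩ yb hyb i hq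
      have hψ' : ψ.toFun (some ⟨a, ha⟩) = some s := by
        rw [show (⟨a, ha⟩ : {w // (freeTensorQC 𝒬).conn u w}) = ⟨a, htc⟩ from
          Subtype.ext rfl]
        exact hψ
      have hs : s = ya := Option.some_inj.mp (hψ'.symm.trans hya)
      refine Relation.EqvGen.rel _ _ ⟨i, Or.inr (Or.inr (Or.inr ?_))⟩
      rw [Tq_e, ← hs]
      exact hqy
  | refl a =>
    intro ha hb ya yb hya hyb
    have hs : (⟨a, ha⟩ : {w // (freeTensorQC 𝒬).conn u w}) = ⟨a, hb⟩ := Subtype.ext rfl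
    rw [hs] at hya
    have : ya = yb := Option.some_inj.mp (hya.symm.trans hyb)
    rw [this]
    exact Relation.EqvGen.refl _
  | symm a b _ ih =>
    intro ha hb ya yb hya hyb
    exact Relation.EqvGen.symm _ _ (ih hb ha yb ya hyb hya)
  | trans a c b h1 _ ih1 ih2 =>
    intro ha hb ya yb hya hyb
    have hcc : (freeTensorQC 𝒬).conn u c :=
      Relation.EqvGen.trans _ _ _ ha (h.conn_q_to_t h1)
    obtain ⟨yc, hyc⟩ := psi_total ψ hinj ⟨c, hcc⟩
    exact Relation.EqvGen.trans _ _ _ (ih1 ha hcc ya yc hya hyc)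
      (ih2 hcc hb yc yb hyc hyb)

variable (hsurj : Function.Surjective ψ.toFun)
include hsurj

lemma conn_backward {c d : FreeMonoid Q} (hcd : (freeQTensorQC 𝒬).conn c d) :
    ∀ (hc : (freeTensorQC 𝒬).conn v c) (hd : (freeTensorQC 𝒬).conn v d)
      (x y : {w // (freeTensorQC 𝒬).conn u w})
      (_ : ψ.toFun (some x) = some ⟨c, hc⟩) (_ : ψ.toFun (some y) = some ⟨d, hd⟩),
      (freeQTensorQC 𝒬).conn x.val y.val := by
  induction hcd with
  | rel c d hr =>
    intro hc hd x y hx hy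
    obtain ⟨i, hcc⟩ := hr
    rcases hcc with hfcd | hfdc | hecd | hedc
    · have hq : qfreeF 𝒬 i c = some d := by rw [← Tq_f]; exact hfcd
      obtain ⟨t, htc, s, hqx, hψt, hsval⟩ :=
        edge_f_backward h hli ψ hinj x ⟨c, hc⟩ hx i hq
      have hs : s = ⟨d, hd⟩ := Subtype.ext hsval
      rw [hs] at hψt
      have : y = ⟨t, htc⟩ := Option.some_inj.mp (hinj (hy.trans hψt.symm))
      refine Relation.EqvGen.rel _ _ ⟨i, Or.inl ?_⟩
      rw [Tq_f, this]
      exact hqx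
    · have hq : qfreeF 𝒬 i d = some c := by rw [← Tq_f]; exact hfdc
      obtain ⟨t, htc, s, hqx, hψt, hsval⟩ :=
        edge_f_backward h hli ψ hinj y ⟨d, hd⟩ hy i hq
      have hs : s = ⟨c, hc⟩ := Subtype.ext hsval
      rw [hs] at hψt
      have : x = ⟨t, htc⟩ := Option.some_inj.mp (hinj (hx.trans hψt.symm))
      refine Relation.EqvGen.rel _ _ ⟨i, Or.inr (Or.inl ?_)⟩
      rw [Tq_f, this]
      exact hqx
    · have hq : qfreeE 𝒬 i c = some d := by rw [← Tq_e]; exact hecd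
      obtain ⟨t, htc, s, hqx, hψt, hsval⟩ :=
        edge_e_backward h hli ψ hinj x ⟨c, hc⟩ hx i hq
      have hs : s = ⟨d, hd⟩ := Subtype.ext hsval
      rw [hs] at hψt
      have : y = ⟨t, htc⟩ := Option.some_inj.mp (hinj (hy.trans hψt.symm))
      refine Relation.EqvGen.rel _ _ ⟨i, Or.inr (Or.inr (Or.inl ?_))⟩
      rw [Tq_e, this]
      exact hqx
    · have hq : qfreeE 𝒬 i d = some c := by rw [← Tq_e]; exact hedc
      obtain ⟨t, htc, s, hqx, hψt, hsval⟩ :=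
        edge_e_backward h hli ψ hinj y ⟨d, hd⟩ hy i hq
      have hs : s = ⟨c, hc⟩ := Subtype.ext hsval
      rw [hs] at hψt
      have : x = ⟨t, htc⟩ := Option.some_inj.mp (hinj (hx.trans hψt.symm))
      refine Relation.EqvGen.rel _ _ ⟨i, Or.inr (Or.inr (Or.inr ?_))⟩
      rw [Tq_e, this]
      exact hqx
  | refl c =>
    intro hc hd x y hx hy
    have hs : (⟨c, hc⟩ : {w // (freeTensorQC 𝒬).conn v w}) = ⟨c, hd⟩ := Subtype.ext rfl
    rw [hs] at hx
    have : x = y := Option.some_inj.mp (hinj (hx.trans hy.symm))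
    rw [this]
    exact Relation.EqvGen.refl _
  | symm c d _ ih =>
    intro hc hd x y hx hy
    exact Relation.EqvGen.symm _ _ (ih hd hc y x hy hx)
  | trans c m d h1 _ ih1 ih2 =>
    intro hc hd x y hx hy
    have hmm : (freeTensorQC 𝒬).conn v m :=
      Relation.EqvGen.trans _ _ _ hc (h.conn_q_to_t h1)
    obtain ⟨o, ho⟩ := hsurj (some ⟨m, hmm⟩)
    cases o with
    | none =>
      rw [ψ.map_none] at ho
      exact absurd ho (by simp)
    | some xm =>
      exact Relation.EqvGen.trans _ _ _ (ih1 hc hmm x xm hx ho)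
        (ih2 hmm hd xm y ho hy)

end Conn
/-- If the set of weights of elements of a seminormal quasi-crystal
`Q` is linearly independent, then the plactic congruence is contained in the
hypoplactic congruence; consequently `hypo(Q)` is a monoid quotient of `plac(Q)`. -/
theorem placticRel_le_hypoRel {V : Type*} [NormedAddCommGroup V]
    [InnerProductSpace ℝ V] {ι : Type*} {S : QCSetting V ι} {Q : Type*}
    (𝒬 : QC S Q) (h : 𝒬.IsSeminormal)
    (hli : LinearIndependent ℝ
      ((↑) : (Set.range fun x : Q => ((𝒬.wt x : V))) → V)) :
    ∀ u v : FreeMonoid Q, placticRel 𝒬 u v → hypoRel 𝒬 u v := by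
  intro u v hpl
  obtain ⟨ψ, hbij, hu⟩ := hpl
  obtain ⟨hinj, hsurj⟩ := hbij
  set σ : {w // (freeTensorQC 𝒬).conn u w} → {w // (freeTensorQC 𝒬).conn v w} :=
    fun x => (psi_total ψ hinj x).choose with hσdef
  have hσ : ∀ x, ψ.toFun (some x) = some (σ x) :=
    fun x => (psi_total ψ hinj x).choose_spec
  have hconv : ∀ {a b : FreeMonoid Q}, (freeQTensorQC 𝒬).conn a b →
      (freeTensorQC 𝒬).conn a b := fun hab => h.conn_q_to_t hab
  have htarget : ∀ x : {w // (freeQTensorQC 𝒬).conn u w},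
      (freeQTensorQC 𝒬).conn v (σ ⟨x.val, hconv x.2⟩).val := fun x =>
    conn_forward h hli ψ hinj x.2 (Relation.EqvGen.refl u) (hconv x.2)
      ⟨v, Relation.EqvGen.refl v⟩ (σ ⟨x.val, hconv x.2⟩) hu (hσ _)
  refine ⟨{ toFun := fun o => o.bind
              (fun x => some ⟨(σ ⟨x.val, hconv x.2⟩).val, htarget x⟩),
            map_none := rfl,
            wt_eq := ?_, eps_eq := ?_, phi_eq := ?_,
            comm_e := ?_, comm_f := ?_ }, ⟨?_, ?_⟩, ?_⟩
  · -- wt_eq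
    intro x y hxy
    have hy := Option.some_inj.mp hxy
    rw [← hy]
    exact ψ.wt_eq ⟨x.val, hconv x.2⟩ (σ ⟨x.val, hconv x.2⟩) (hσ _)
  · -- eps_eq
    intro i x y hxy
    have hy := Option.some_inj.mp hxy
    rw [← hy]
    exact (qtransfer h hli ψ ⟨x.val, hconv x.2⟩ (σ ⟨x.val, hconv x.2⟩) (hσ _) i).1.symm
  · -- phi_eq
    intro i x y hxy
    have hy := Option.some_inj.mp hxy
    rw [← hy]
    exact (qtransfer h hli ψ ⟨x.val, hconv x.2⟩ (σ ⟨x.val, hconv x.2⟩) (hσ _) i).2.symm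
  · -- comm_e
    intro i x x' y y' he hx hy
    have hy1 := Option.some_inj.mp hx
    have hy2 := Option.some_inj.mp hy
    rw [← hy1, ← hy2]
    have hqe : qfreeE 𝒬 i x.val = some x'.val := by
      rw [← Tq_e]
      exact (compQC_e_iff _ _ _ _ _).mp he
    obtain ⟨htc, s, hψs, hqy⟩ :=
      edge_e_forward h hli ψ hinj ⟨x.val, hconv x.2⟩ (σ ⟨x.val, hconv x.2⟩) (hσ _) i hqe
    have hteq : (⟨x'.val, htc⟩ : {w // (freeTensorQC 𝒬).conn u w})
        = ⟨x'.val, hconv x'.2⟩ := Subtype.ext rfl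
    rw [hteq] at hψs
    have hs : s = σ ⟨x'.val, hconv x'.2⟩ := Option.some_inj.mp (hψs.symm.trans (hσ _))
    refine (compQC_e_iff _ _ _ _ _).mpr ?_
    rw [Tq_e]
    show qfreeE 𝒬 i (σ ⟨x.val, hconv x.2⟩).val = _
    rw [hqy, hs]
  · -- comm_f
    intro i x x' y y' hf hx hy
    have hy1 := Option.some_inj.mp hx
    have hy2 := Option.some_inj.mp hy
    rw [← hy1, ← hy2]
    have hqf : qfreeF 𝒬 i x.val = some x'.val := by
      rw [← Tq_f]
      exact (compQC_f_iff _ _ _ _ _).mp hf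
    obtain ⟨htc, s, hψs, hqy⟩ :=
      edge_f_forward h hli ψ hinj ⟨x.val, hconv x.2⟩ (σ ⟨x.val, hconv x.2⟩) (hσ _) i hqf
    have hteq : (⟨x'.val, htc⟩ : {w // (freeTensorQC 𝒬).conn u w})
        = ⟨x'.val, hconv x'.2⟩ := Subtype.ext rfl
    rw [hteq] at hψs
    have hs : s = σ ⟨x'.val, hconv x'.2⟩ := Option.some_inj.mp (hψs.symm.trans (hσ _))
    refine (compQC_f_iff _ _ _ _ _).mpr ?_
    rw [Tq_f]
    show qfreeF 𝒬 i (σ ⟨x.val, hconv x.2⟩).val = _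
    rw [hqy, hs]
  · -- injective
    intro o1 o2 heq
    cases o1 with
    | none =>
      cases o2 with
      | none => rfl
      | some x2 => exact absurd heq (by simp)
    | some x1 =>
      cases o2 with
      | none => exact absurd heq (by simp)
      | some x2 =>
        have h1 := Option.some_inj.mp heq
        have hval : (σ ⟨x1.val, hconv x1.2⟩).val = (σ ⟨x2.val, hconv x2.2⟩).val :=
          congrArg (fun t : {w // (freeQTensorQC 𝒬).conn v w} => t.val) h1
        have hσeq : σ ⟨x1.val, hconv x1.2⟩ = σ ⟨x2.val, hconv x2.2⟩ := Subtype.ext hval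
        have h2 : ψ.toFun (some ⟨x1.val, hconv x1.2⟩)
            = ψ.toFun (some ⟨x2.val, hconv x2.2⟩) := by
          rw [hσ ⟨x1.val, hconv x1.2⟩, hσ ⟨x2.val, hconv x2.2⟩, hσeq]
        have h3 := Option.some_inj.mp (hinj h2)
        have h4 : x1.val = x2.val :=
          congrArg (fun t : {w // (freeTensorQC 𝒬).conn u w} => t.val) h3
        rw [Subtype.ext h4]
  · -- surjective
    intro o
    cases o with
    | none => exact ⟨none, rfl⟩
    | some w' =>
      have hTw' : (freeTensorQC 𝒬).conn v w'.val := hconv w'.2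
      obtain ⟨o0, ho0⟩ := hsurj (some ⟨w'.val, hTw'⟩)
      cases o0 with
      | none =>
        rw [ψ.map_none] at ho0
        exact absurd ho0 (by simp)
      | some x0 =>
        have hconn : (freeQTensorQC 𝒬).conn u x0.val :=
          conn_backward h hli ψ hinj hsurj w'.2 (Relation.EqvGen.refl v) hTw'
            ⟨u, Relation.EqvGen.refl u⟩ x0 hu ho0
        refine ⟨some ⟨x0.val, hconn⟩, ?_⟩
        have hx0eq : (⟨x0.val, hconv hconn⟩ : {w // (freeTensorQC 𝒬).conn u w}) = x0 :=
          Subtype.ext rfl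
        have hσx0 : σ ⟨x0.val, hconv hconn⟩ = ⟨w'.val, hTw'⟩ := by
          refine Option.some_inj.mp ?_
          rw [← hσ ⟨x0.val, hconv hconn⟩, hx0eq, ho0]
        show some (⟨(σ ⟨x0.val, hconv hconn⟩).val, _⟩ :
          {w // (freeQTensorQC 𝒬).conn v w}) = some w'
        rw [Option.some_inj]
        refine Subtype.ext ?_
        exact congrArg (fun t : {w // (freeTensorQC 𝒬).conn v w} => t.val) hσx0
  · -- maps u to v
    have hueq : (⟨u, hconv (Relation.EqvGen.refl u)⟩ :
        {w // (freeTensorQC 𝒬).conn u w}) = ⟨u, Relation.EqvGen.refl u⟩ :=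
      Subtype.ext rfl
    have hσu : σ ⟨u, hconv (Relation.EqvGen.refl u)⟩
        = ⟨v, Relation.EqvGen.refl v⟩ := by
      refine Option.some_inj.mp ?_
      rw [← hσ ⟨u, hconv (Relation.EqvGen.refl u)⟩, hueq, hu]
    show some (⟨(σ ⟨u, hconv (Relation.EqvGen.refl u)⟩).val, _⟩ :
      {w // (freeQTensorQC 𝒬).conn v w}) = some ⟨v, Relation.EqvGen.refl v⟩
    rw [Option.some_inj]
    refine Subtype.ext ?_
    exact congrArg (fun t : {w // (freeTensorQC 𝒬).conn v w} => t.val) hσu
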